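/- arXiv:0911.4851 — 4 statements merged into one kernel-verified Lean document; each statement's English description precedes it below -/
import Mathlib

section
/- Let G be an M-graph and let v be a non-real vertex of G. Then there exists a real vertex w of G such that the divisor v + v̄ is linearly equivalent to 2w on G. -/
/-- A finite graph: finite sets of vertices and edges, and an incidence map
assigning to each edge the (unordered) pair of its ends (loops and multiple
edges are allowed). -/
structure FinGraph where
  V : Type
  E : Type
  [decV : DecidableEq V]
  [fintV : Fintype V]
  [fintE : Fintype E]
  ψ : E → Sym2 V

attribute [instance] FinGraph.decV FinGraph.fintV FinGraph.fintE

namespace FinGraph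

variable (G : FinGraph)

/-- Two vertices are adjacent if some edge has exactly them as its ends. -/
def Adj (v w : G.V) : Prop := ∃ e : G.E, G.ψ e = s(v, w)

/-- A graph is connected if it is nonempty and any two vertices are joined by a
walk (equivalently, related by the reflexive-transitive closure of adjacency). -/
def Connected : Prop := Nonempty G.V ∧ ∀ v w : G.V, Relation.ReflTransGen G.Adj v w

/-- The number of connected components. -/
noncomputable def numComponents : ℕ :=
  Nat.card (Quotient (Relation.EqvGen.setoid G.Adj))

/-- The genus `g(G) = c(G) + e(G) - v(G)`. -/
noncomputable def genus : ℤ :=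
  (numComponents G : ℤ) + (Fintype.card G.E : ℤ) - (Fintype.card G.V : ℤ)

/-- A real structure on a finite graph: involutions on vertices and edges
compatible with the incidence map. -/
structure RealStructure (G : FinGraph) where
  ιV : G.V → G.V
  ιE : G.E → G.E
  ιV_invol : ∀ v, ιV (ιV v) = v
  ιE_invol : ∀ e, ιE (ιE e) = e
  compat : ∀ e, G.ψ (ιE e) = (G.ψ e).map ιV

variable {G} (σ : RealStructure G)

/-- A vertex is real if it is fixed by the involution. -/
def RealV (v : G.V) : Prop := σ.ιV v = v

/-- An edge is real if it is fixed by the involution. -/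
def RealE (e : G.E) : Prop := σ.ιE e = e

/-- A real edge is isolated if some end of it is not a real vertex. -/
def IsolatedRealE (e : G.E) : Prop := RealE σ e ∧ ∃ v ∈ G.ψ e, ¬ RealV σ v

/-- A non-isolated real edge: a real edge all of whose ends are real vertices. -/
def NonIsolatedRealE (e : G.E) : Prop := RealE σ e ∧ ∀ v ∈ G.ψ e, RealV σ v

/-- The vertex set of the real locus graph `G(ℝ)`: the real vertices. -/
def RV := {v : G.V // RealV σ v}

/-- Adjacency in the real locus graph `G(ℝ)`: via non-isolated real edges. -/
def adjR (v w : RV σ) : Prop :=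
  ∃ e : G.E, NonIsolatedRealE σ e ∧ G.ψ e = s(v.1, w.1)

/-- The connected components of the real locus graph `G(ℝ)`. -/
def CompR := Quotient (Relation.EqvGen.setoid (adjR σ))

/-- The genus of a connected component of `G(ℝ)`:
`1 + (number of its edges) - (number of its vertices)`. -/
noncomputable def compGenus (c : CompR σ) : ℤ :=
  1 + (Nat.card {e : G.E // NonIsolatedRealE σ e ∧
        ∃ v : RV σ, v.1 ∈ G.ψ e ∧ Quotient.mk (Relation.EqvGen.setoid (adjR σ)) v = c} : ℤ)
    - (Nat.card {v : RV σ // Quotient.mk (Relation.EqvGen.setoid (adjR σ)) v = c} : ℤ)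

/-- The number `s(G) = e^i(G) + Σ_i (g(G(ℝ)_i) + 1)`. -/
noncomputable def sNum : ℤ :=
  (Nat.card {e : G.E // IsolatedRealE σ e} : ℤ) + ∑ᶠ c : CompR σ, (compGenus σ c + 1)

/-- One step of a walk containing no real vertex and no real edge. -/
def nonRealAdj (v w : G.V) : Prop :=
  ¬ RealV σ v ∧ ¬ RealV σ w ∧ ∃ e : G.E, ¬ RealE σ e ∧ G.ψ e = s(v, w)

/-- `a(G) = 1` iff there is a non-real vertex `v` and a walk from `v` to `v̄`
containing no real vertex and no real edge. -/
def aProp : Prop :=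
  ∃ v : G.V, ¬ RealV σ v ∧ Relation.ReflTransGen (nonRealAdj σ) v (σ.ιV v)

/-- `a(G)` as a number. -/
noncomputable def aNum : ℕ := @ite _ (aProp σ) (Classical.dec _) 1 0

/-- The degree of a divisor (a divisor on `G` is a function `G.V → ℤ`). -/
def deg (D : G.V → ℤ) : ℤ := ∑ v, D v

/-- A divisor is effective if all its coefficients are nonnegative. -/
def Eff (D : G.V → ℤ) : Prop := ∀ v, 0 ≤ D v

variable (G)

/-- The contribution of the edge `e` to the principal divisor `Δ(f)`. -/
def edgeLap (f : G.V → ℤ) (e : G.E) : G.V → ℤ :=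
  Sym2.lift ⟨fun a b v => (if v = a then f b - f a else 0) + (if v = b then f a - f b else 0),
    fun a b => funext fun v => add_comm _ _⟩ (G.ψ e)

/-- The principal divisor `Δ(f)(v) = Σ_{e, ψ(e) = {v,w}} (f(w) - f(v))`. -/
def Lap (f : G.V → ℤ) : G.V → ℤ := fun v => ∑ e, edgeLap G f e v

/-- Two divisors are linearly equivalent if their difference is principal. -/
def LinEquiv (D₁ D₂ : G.V → ℤ) : Prop := ∃ f : G.V → ℤ, D₂ = D₁ + Lap G f

variable {G}

/-- The conjugate divisor `D̄(v) = D(v̄)`. -/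
def conjDiv (D : G.V → ℤ) : G.V → ℤ := fun v => D (σ.ιV v)

/-- A divisor is real if it equals its conjugate. -/
def IsRealDiv (D : G.V → ℤ) : Prop := conjDiv σ D = D

variable (G)

/-- The divisor consisting of the single vertex `v`. -/
def unitDiv (v : G.V) : G.V → ℤ := fun w => if w = v then 1 else 0

/-- `RankGE G D r` : every effective divisor `E` of degree `r` is dominated by
some effective divisor `D'` linearly equivalent to `D`.  The rank `rk(D)` is
the greatest `r` with this property (note it holds vacuously for `r < 0`, so
the greatest such `r` is `-1` exactly when `|D| = ∅`). -/
def RankGE (D : G.V → ℤ) (r : ℤ) : Prop :=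
  ∀ E : G.V → ℤ, Eff E → deg E = r →
    ∃ D' : G.V → ℤ, LinEquiv G D D' ∧ Eff D' ∧ Eff (D' - E)

/-- `r` is the rank of `D`: it is the greatest element of `{r | RankGE G D r}`. -/
def HasRank (D : G.V → ℤ) (r : ℤ) : Prop := IsGreatest {r' : ℤ | RankGE G D r'} r

variable {G}

/-- The real analogue of `RankGE`, using real effective divisors only. -/
def RealRankGE (D : G.V → ℤ) (r : ℤ) : Prop :=
  ∀ E : G.V → ℤ, Eff E → IsRealDiv σ E → deg E = r →
    ∃ D' : G.V → ℤ, LinEquiv G D D' ∧ Eff D' ∧ IsRealDiv σ D' ∧ Eff (D' - E)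

/-- `r` is the real rank of `D`. -/
def HasRealRank (D : G.V → ℤ) (r : ℤ) : Prop :=
  IsGreatest {r' : ℤ | RealRankGE σ D r'} r

/-- An M-graph: a connected graph with a real structure, no isolated real
edges, and `s(G) = g(G) + 1`. -/
def IsMGraph : Prop :=
  G.Connected ∧ (∀ e : G.E, ¬ IsolatedRealE σ e) ∧ sNum σ = G.genus + 1

/-- A strong M-graph: an M-graph such that `G(ℝ)` has `g(G) + 1` connected
components. -/
def IsStrongMGraph : Prop :=
  IsMGraph σ ∧ (Nat.card (CompR σ) : ℤ) = G.genus + 1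

/-- The degree of the restriction of a divisor to the connected component `c`
of the real locus graph `G(ℝ)`. -/
noncomputable def degOn (c : CompR σ) (D : G.V → ℤ) : ℤ :=
  ∑ᶠ (v : {v : RV σ // Quotient.mk (Relation.EqvGen.setoid (adjR σ)) v = c}), D v.1.1

/-- The valence of a vertex: the number of edges incident to it. -/
noncomputable def valence (v : G.V) : ℤ := (Nat.card {e : G.E // v ∈ G.ψ e} : ℤ)

/-- The canonical divisor `K_G = Σ_v (val(v) - 2) v`. -/
noncomputable def canonicalDiv : G.V → ℤ := fun v => valence v - 2

end FinGraph

section MAuxSec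
open Relation

namespace MAux

variable {V E : Type} [Fintype V] [Fintype E]

/-- Adjacency relation from an incidence map. -/
def adjOf (ψ : E → Sym2 V) (a b : V) : Prop := ∃ e, ψ e = s(a, b)

/-- Walks of given length from `root`. -/
def walkN (ψ : E → Sym2 V) (root : V) : ℕ → V → Prop
  | 0, v => v = root
  | n+1, v => ∃ u e, walkN ψ root n u ∧ ψ e = s(u, v)

lemma exists_walkN {ψ : E → Sym2 V} {root v : V}
    (h : ReflTransGen (adjOf ψ) root v) : ∃ n, walkN ψ root n v := by
  induction h with
  | refl => exact ⟨0, rfl⟩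
  | tail hab hbc ih =>
    obtain ⟨n, hn⟩ := ih
    obtain ⟨e, he⟩ := hbc
    exact ⟨n + 1, _, e, hn, he⟩

/-- A connected graph has at least `card V - 1` edges. -/
lemma card_le_of_conn (ψ : E → Sym2 V) (root : V)
    (hconn : ∀ v, ReflTransGen (adjOf ψ) root v) :
    Fintype.card V ≤ Fintype.card E + 1 := by
  classical
  set d : V → ℕ := fun v => Nat.find (exists_walkN (hconn v)) with hd
  have key : ∀ x : {x : V // x ≠ root}, ∃ e u, ψ e = s(u, x.1) ∧ d u < d x.1 := by
    rintro ⟨x, hx⟩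
    have hspec : walkN ψ root (d x) x := Nat.find_spec (exists_walkN (hconn x))
    cases hdx : d x with
    | zero => rw [hdx] at hspec; exact absurd hspec hx
    | succ m =>
      rw [hdx] at hspec
      obtain ⟨u, e, hu, he⟩ := hspec
      refine ⟨e, u, he, ?_⟩
      have hle : d u ≤ m := Nat.find_min' _ hu
      omega
  have hinj : Function.Injective (fun x => (key x).choose) := by
    intro x y hxy
    simp only at hxy
    obtain ⟨u, hux, hdu⟩ := (key x).choose_spec
    obtain ⟨w, hwy, hdw⟩ := (key y).choose_spec
    have heq : s(u, x.1) = s(w, y.1) := by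
      rw [← hux, ← hwy, hxy]
    rw [Sym2.eq_iff] at heq
    rcases heq with ⟨-, h2⟩ | ⟨h1, h2⟩
    · exact Subtype.ext h2
    · rw [h1] at hdu; rw [← h2] at hdw; omega
  have hcard := Fintype.card_le_of_injective _ hinj
  have h1 : Fintype.card {x : V // x ≠ root} = Fintype.card V - 1 := by
    rw [Fintype.card_subtype_compl, Fintype.card_subtype_eq]
  have h2 : 0 < Fintype.card V := Fintype.card_pos_iff.mpr ⟨root⟩
  omega

/-- In a connected graph with `e + 1 = v`, every edge is a bridge. -/
lemma not_conn_without_bridge (ψ : E → Sym2 V)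
    (hconn : ∀ v w, ReflTransGen (adjOf ψ) v w)
    (hcard : Fintype.card E + 1 = Fintype.card V)
    (ε : E) {t t' : V} (hε : ψ ε = s(t, t')) :
    ¬ ReflTransGen (fun a b => ∃ e, e ≠ ε ∧ ψ e = s(a, b)) t t' := by
  classical
  intro hpath
  set adj' : V → V → Prop := fun a b => ∃ e, e ≠ ε ∧ ψ e = s(a, b) with hadj'
  have hsymm : Symmetric adj' := by
    rintro a b ⟨e, hne, he⟩
    exact ⟨e, hne, by rw [Sym2.eq_swap]; exact he⟩
  have hconn' : ∀ v w, ReflTransGen adj' v w := by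
    intro v w
    induction hconn v w with
    | refl => exact .refl
    | tail hab hbc ih =>
      obtain ⟨e, he⟩ := hbc
      by_cases heq : e = ε
      · subst heq
        have h2 : s(t, t') = _ := hε.symm.trans he
        rw [Sym2.eq_iff] at h2
        rcases h2 with ⟨h3, h4⟩ | ⟨h3, h4⟩
        · exact ih.trans (h3 ▸ h4 ▸ hpath)
        · exact ih.trans (h3 ▸ h4 ▸ ((@Relation.ReflTransGen.stdSymm _ adj' ⟨fun a b h => hsymm h⟩).symm _ _ hpath))
      · exact ih.tail ⟨e, heq, he⟩
  have hle := card_le_of_conn (fun e : {e : E // e ≠ ε} => ψ e.1) t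
    (fun v => ReflTransGen.mono (by rintro a b ⟨e, hne, he⟩; exact ⟨⟨e, hne⟩, he⟩) t v (hconn' t v))
  have h1 : Fintype.card {e : E // e ≠ ε} = Fintype.card E - 1 := by
    rw [Fintype.card_subtype_compl, Fintype.card_subtype_eq]
  have h2 : 0 < Fintype.card E := Fintype.card_pos_iff.mpr ⟨ε⟩
  omega

/-- Counting a finite type fibered over a finite base. -/
lemma sum_nat_card_fiber {α β : Type} [Fintype α] [Fintype β] (g : α → β) :
    ∑ b : β, Nat.card {a : α // g a = b} = Fintype.card α := by
  classical
  have h1 : Fintype.card α = ∑ b : β, Fintype.card {a : α // g a = b} := by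
    rw [← Fintype.card_sigma]
    exact Fintype.card_congr (Equiv.sigmaFiberEquiv _).symm
  rw [h1]
  exact Finset.sum_congr rfl fun b _ => Nat.card_eq_fintype_card

/-- A fixed-point-free involution pairs up a finite type. -/
lemma card_eq_two_mul (j : V → V) (hj : ∀ a, j (j a) = a) (hfix : ∀ a, j a ≠ a)
    (st : Setoid V) (hst : ∀ a b : V, st.r a b ↔ (b = a ∨ b = j a)) :
    Fintype.card V = 2 * Nat.card (Quotient st) := by
  classical
  haveI : Fintype (Quotient st) := Quotient.fintype st
  have h1 : Fintype.card V = ∑ q : Quotient st, Nat.card {a : V // Quotient.mk st a = q} :=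
    (sum_nat_card_fiber _).symm
  have h2 : ∀ q : Quotient st, Nat.card {a : V // Quotient.mk st a = q} = 2 := by
    intro q
    induction q using Quotient.inductionOn with
    | h a =>
      have hmem : ∀ x : V, (Quotient.mk st x = Quotient.mk st a) ↔ (x = a ∨ x = j a) := by
        intro x
        rw [Quotient.eq]
        change st.r x a ↔ _
        rw [hst]
        constructor
        · rintro (rfl | h)
          · exact Or.inl rfl
          · right; rw [h, hj]
        · rintro (rfl | rfl)
          · exact Or.inl rfl
          · right; rw [hj]
      rw [Nat.card_eq_fintype_card, Fintype.card_subtype]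
      have hflt : Finset.filter (fun x : V => Quotient.mk st x = Quotient.mk st a)
          Finset.univ = {a, j a} := by
        ext x
        simp only [Finset.mem_filter, Finset.mem_univ, true_and, Finset.mem_insert,
          Finset.mem_singleton]
        exact hmem x
      rw [hflt, Finset.card_pair (Ne.symm (hfix a))]
  rw [h1, Finset.sum_congr rfl fun q _ => h2 q, Finset.sum_const, Finset.card_univ,
    Nat.card_eq_fintype_card, smul_eq_mul, mul_comm]

end MAux
end MAuxSec

namespace FinGraph
open Relation

variable {G : FinGraph} (σ : RealStructure G)

/-- One step of the "fiber" relation: conjugation or a real edge. -/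
def fibRel (u w : G.V) : Prop := σ.ιV u = w ∨ ∃ e, RealE σ e ∧ G.ψ e = s(u, w)

/-- The quotient `T` of the vertex set (vertices of the quotient tree). -/
def TT := Quotient (Relation.EqvGen.setoid (fibRel σ))

/-- Projection to `T`. -/
def pr (u : G.V) : TT σ := Quotient.mk _ u

instance : Finite (TT σ) := by unfold TT; exact Quotient.finite _

lemma pr_conj (u : G.V) : pr σ (σ.ιV u) = pr σ u := by
  refine (Quotient.sound ?_).symm
  exact EqvGen.rel _ _ (Or.inl rfl)

lemma pr_eq_of_eqv {u w : G.V} (h : EqvGen (fibRel σ) u w) : pr σ u = pr σ w :=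
  Quotient.sound h

variable {σ}

lemma nonreal_conj {u : G.V} (hu : ¬ RealV σ u) : ¬ RealV σ (σ.ιV u) := by
  intro h
  have h' : σ.ιV (σ.ιV u) = σ.ιV u := h
  rw [σ.ιV_invol] at h'
  exact hu h'.symm

lemma realE_ends (hiso : ∀ e : G.E, ¬ IsolatedRealE σ e) {e : G.E} (he : RealE σ e) :
    ∀ x ∈ G.ψ e, RealV σ x := by
  intro x hx
  by_contra hnx
  exact hiso e ⟨he, x, hx, hnx⟩

lemma real_of_fibRel (hiso : ∀ e : G.E, ¬ IsolatedRealE σ e) {u w : G.V}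
    (h : fibRel σ u w) : RealV σ u ↔ RealV σ w := by
  rcases h with h | ⟨e, he, hψ⟩
  · subst h
    constructor
    · intro hr
      show σ.ιV (σ.ιV u) = σ.ιV u
      rw [σ.ιV_invol]
      exact hr.symm
    · intro hr
      have hr' : σ.ιV (σ.ιV u) = σ.ιV u := hr
      rw [σ.ιV_invol] at hr'
      exact hr'.symm
  · have h1 : RealV σ u := realE_ends hiso he u (by rw [hψ]; exact Sym2.mem_mk_left u w)
    have h2 : RealV σ w := realE_ends hiso he w (by rw [hψ]; exact Sym2.mem_mk_right u w)
    simp [h1, h2]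

lemma real_of_eqv (hiso : ∀ e : G.E, ¬ IsolatedRealE σ e) {u w : G.V}
    (h : EqvGen (fibRel σ) u w) : RealV σ u ↔ RealV σ w := by
  induction h with
  | rel a b hab => exact real_of_fibRel hiso hab
  | refl => exact Iff.rfl
  | symm a b _ ih => exact ih.symm
  | trans a b c _ _ ih1 ih2 => exact ih1.trans ih2

lemma real_of_pr_eq (hiso : ∀ e : G.E, ¬ IsolatedRealE σ e) {u w : G.V}
    (h : pr σ u = pr σ w) : RealV σ u ↔ RealV σ w :=
  real_of_eqv hiso (Quotient.exact h)

lemma pair_iff_of_eqv (hiso : ∀ e : G.E, ¬ IsolatedRealE σ e) {u : G.V}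
    (hu : ¬ RealV σ u) {a b : G.V} (h : EqvGen (fibRel σ) a b) :
    (a = u ∨ a = σ.ιV u) ↔ (b = u ∨ b = σ.ιV u) := by
  have hmemreal : ∀ x : G.V, (x = u ∨ x = σ.ιV u) → ¬ RealV σ x := by
    rintro x (rfl | rfl)
    · exact hu
    · exact nonreal_conj hu
  have hstep : ∀ a b : G.V, fibRel σ a b → (a = u ∨ a = σ.ιV u) → (b = u ∨ b = σ.ιV u) := by
    rintro a b (h1 | ⟨e, he, hψ⟩) ha
    · rcases ha with rfl | rfl
      · exact Or.inr h1.symm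
      · exact Or.inl (by rw [← h1, σ.ιV_invol])
    · exact absurd (realE_ends hiso he a (by rw [hψ]; exact Sym2.mem_mk_left a b))
        (hmemreal a ha)
  have hstep' : ∀ a b : G.V, fibRel σ a b → (b = u ∨ b = σ.ιV u) → (a = u ∨ a = σ.ιV u) := by
    rintro a b (h1 | ⟨e, he, hψ⟩) hb
    · rcases hb with rfl | rfl
      · exact Or.inr (by rw [← h1, σ.ιV_invol])
      · left
        have h2 := congrArg σ.ιV h1
        rwa [σ.ιV_invol, σ.ιV_invol] at h2
    · exact absurd (realE_ends hiso he b (by rw [hψ]; exact Sym2.mem_mk_right a b))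
        (hmemreal b hb)
  induction h with
  | rel a b hab => exact ⟨hstep a b hab, hstep' a b hab⟩
  | refl => exact Iff.rfl
  | symm a b _ ih => exact ih.symm
  | trans a b c _ _ ih1 ih2 => exact ih1.trans ih2

lemma fiber_pair (hiso : ∀ e : G.E, ¬ IsolatedRealE σ e) {u x : G.V}
    (hu : ¬ RealV σ u) (h : pr σ x = pr σ u) :
    x = u ∨ x = σ.ιV u :=
  (pair_iff_of_eqv hiso hu (Quotient.exact h)).mpr (Or.inl rfl)

variable (σ)

/-- Non-real edges. -/
def NE := {e : G.E // ¬ RealE σ e}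

instance : Finite (NE σ) := by unfold NE; exact Subtype.finite

/-- Conjugation on non-real edges. -/
def conjNE (e : NE σ) : NE σ :=
  ⟨σ.ιE e.1, fun h => by
    have h' : σ.ιE (σ.ιE e.1) = σ.ιE e.1 := h
    rw [σ.ιE_invol] at h'
    exact e.2 h'.symm⟩

lemma conjNE_invol (e : NE σ) : conjNE σ (conjNE σ e) = e := Subtype.ext (σ.ιE_invol e.1)

lemma conjNE_ne (e : NE σ) : conjNE σ e ≠ e := fun h => e.2 (congrArg Subtype.val h)

/-- The pairing of conjugate non-real edges. -/
def neSetoid : Setoid (NE σ) :=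
  ⟨fun a b => b = a ∨ b = conjNE σ a, by
    constructor
    · exact fun a => Or.inl rfl
    · rintro a b (rfl | rfl)
      · exact Or.inl rfl
      · exact Or.inr (conjNE_invol σ a).symm
    · rintro a b c (rfl | rfl) h
      · exact h
      · rcases h with rfl | rfl
        · exact Or.inr rfl
        · exact Or.inl (conjNE_invol σ a)⟩

/-- Edges of the quotient tree. -/
def TE := Quotient (neSetoid σ)

instance : Finite (TE σ) := by unfold TE; exact Quotient.finite _

/-- The incidence map of the quotient tree. -/
def ψT : TE σ → Sym2 (TT σ) :=
  Quotient.lift (fun e : NE σ => (G.ψ e.1).map (pr σ)) (by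
    rintro a b (rfl | rfl)
    · rfl
    · show (G.ψ a.1).map (pr σ) = (G.ψ (σ.ιE a.1)).map (pr σ)
      rw [σ.compat, Sym2.map_map]
      congr 1
      funext x
      exact (pr_conj σ x).symm)

lemma ψT_mk (e : NE σ) : ψT σ (Quotient.mk _ e) = (G.ψ e.1).map (pr σ) := rfl

lemma te_eq_iff (a b : NE σ) :
    (Quotient.mk (neSetoid σ) a = Quotient.mk (neSetoid σ) b) ↔ (b = a ∨ b = conjNE σ a) :=
  ⟨fun h => Quotient.exact h, fun h => Quotient.sound h⟩

/-- Non-real vertices. -/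
def NV := {v : G.V // ¬ RealV σ v}

instance : Finite (NV σ) := by unfold NV; exact Subtype.finite

/-- Conjugation on non-real vertices. -/
def conjNV (v : NV σ) : NV σ := ⟨σ.ιV v.1, nonreal_conj v.2⟩

lemma conjNV_invol (v : NV σ) : conjNV σ (conjNV σ v) = v := Subtype.ext (σ.ιV_invol v.1)

lemma conjNV_ne (v : NV σ) : conjNV σ v ≠ v := fun h => v.2 (congrArg Subtype.val h)

/-- The pairing of conjugate non-real vertices. -/
def nvSetoid : Setoid (NV σ) :=
  ⟨fun a b => b = a ∨ b = conjNV σ a, by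
    constructor
    · exact fun a => Or.inl rfl
    · rintro a b (rfl | rfl)
      · exact Or.inl rfl
      · exact Or.inr (conjNV_invol σ a).symm
    · rintro a b c (rfl | rfl) h
      · exact h
      · rcases h with rfl | rfl
        · exact Or.inr rfl
        · exact Or.inl (conjNV_invol σ a)⟩

/-- Conjugate pairs of non-real vertices. -/
def QNV := Quotient (nvSetoid σ)

instance : Finite (QNV σ) := by unfold QNV; exact Quotient.finite _

instance : Finite (RV σ) := by unfold RV; exact Subtype.finite

instance : Finite (CompR σ) := by unfold CompR; exact Quotient.finite _

end FinGraph

namespace FinGraph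
open Relation

lemma sym2_exists {α : Type*} (z : Sym2 α) : ∃ x y, z = s(x, y) :=
  Sym2.inductionOn z fun x y => ⟨x, y, rfl⟩

lemma edgeLap_eq {G : FinGraph} (f : G.V → ℤ) {e : G.E} {x y : G.V} (h : G.ψ e = s(x, y)) :
    edgeLap G f e = fun v =>
      (if v = x then f y - f x else 0) + (if v = y then f x - f y else 0) := by
  unfold edgeLap
  rw [h, Sym2.lift_mk]

lemma lap_add (G : FinGraph) (f g : G.V → ℤ) : Lap G (f + g) = Lap G f + Lap G g := by
  funext v
  show (∑ e, edgeLap G (f + g) e v) = (∑ e, edgeLap G f e v) + ∑ e, edgeLap G g e v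
  rw [← Finset.sum_add_distrib]
  refine Finset.sum_congr rfl fun e _ => ?_
  obtain ⟨x, y, h⟩ := sym2_exists (G.ψ e)
  simp only [edgeLap_eq _ h, Pi.add_apply]
  split_ifs <;> ring

lemma linEquiv_trans {G : FinGraph} {D1 D2 D3 : G.V → ℤ}
    (h1 : LinEquiv G D1 D2) (h2 : LinEquiv G D2 D3) : LinEquiv G D1 D3 := by
  obtain ⟨f, hf⟩ := h1
  obtain ⟨g, hg⟩ := h2
  refine ⟨f + g, ?_⟩
  rw [lap_add, hg, hf, add_assoc]

lemma rtg_eqvGen {α : Type*} {r : α → α → Prop} {a b : α}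
    (h : Relation.ReflTransGen r a b) : Relation.EqvGen r a b := by
  induction h with
  | refl => exact .refl a
  | tail _ hbc ih => exact ih.trans _ _ _ (.rel _ _ hbc)

lemma numComponents_eq_one {G : FinGraph} (h : G.Connected) : G.numComponents = 1 := by
  obtain ⟨⟨v⟩, hconn⟩ := h
  rw [numComponents, Nat.card_eq_one_iff_unique]
  refine ⟨⟨fun a b => ?_⟩, ⟨Quotient.mk _ v⟩⟩
  induction a using Quotient.inductionOn with | h x =>
  induction b using Quotient.inductionOn with | h y =>
  exact Quotient.sound (rtg_eqvGen (hconn x y))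

lemma tt_conn_pr {G : FinGraph} (σ : RealStructure G) (hconn : G.Connected) (u w : G.V) :
    ReflTransGen (MAux.adjOf (ψT σ)) (pr σ u) (pr σ w) := by
  induction hconn.2 u w with
  | refl => exact .refl
  | @tail b c hab hbc ih =>
    obtain ⟨e, he⟩ := hbc
    by_cases hre : RealE σ e
    · have hpr : pr σ b = pr σ c := Quotient.sound (EqvGen.rel _ _ (Or.inr ⟨e, hre, he⟩))
      exact hpr ▸ ih
    · refine ih.tail ⟨Quotient.mk _ (⟨e, hre⟩ : NE σ), ?_⟩
      show (G.ψ e).map (pr σ) = _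
      rw [he, Sym2.map_pair_eq]

lemma tt_conn {G : FinGraph} (σ : RealStructure G) (hconn : G.Connected) (t t' : TT σ) :
    ReflTransGen (MAux.adjOf (ψT σ)) t t' := by
  induction t using Quotient.inductionOn with | h u =>
  induction t' using Quotient.inductionOn with | h w =>
  exact tt_conn_pr σ hconn u w

end FinGraph

namespace FinGraph
open Relation

variable {G : FinGraph} (σ : RealStructure G)

lemma sNum_eq (hiso : ∀ e : G.E, ¬ IsolatedRealE σ e) :
    sNum σ = 2 * (Nat.card (CompR σ) : ℤ) + (Nat.card {e : G.E // RealE σ e} : ℤ)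
      - (Nat.card (RV σ) : ℤ) := by
  classical
  haveI : Fintype (CompR σ) := Fintype.ofFinite _
  haveI : Fintype (RV σ) := Fintype.ofFinite _
  haveI : IsEmpty {e : G.E // IsolatedRealE σ e} := ⟨fun e => hiso e.1 e.2⟩
  rw [sNum, Nat.card_of_isEmpty, finsum_eq_sum_of_fintype]
  have hcg : ∀ c : CompR σ, compGenus σ c + 1 =
      2 + (Nat.card {e : G.E // NonIsolatedRealE σ e ∧
        ∃ v : RV σ, v.1 ∈ G.ψ e ∧ Quotient.mk (Relation.EqvGen.setoid (adjR σ)) v = c} : ℤ)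
      - (Nat.card {v : RV σ // Quotient.mk (Relation.EqvGen.setoid (adjR σ)) v = c} : ℤ) := by
    intro c
    rw [compGenus]
    ring
  rw [Finset.sum_congr rfl fun c _ => hcg c, Finset.sum_sub_distrib, Finset.sum_add_distrib]
  -- first sum
  have h2 : (∑ _c : CompR σ, (2 : ℤ)) = 2 * (Nat.card (CompR σ) : ℤ) := by
    rw [Finset.sum_const, Finset.card_univ, Nat.card_eq_fintype_card]
    push_cast
    ring
  -- vertex sum
  have hvert : (∑ c : CompR σ,
      (Nat.card {v : RV σ // Quotient.mk (Relation.EqvGen.setoid (adjR σ)) v = c} : ℤ))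
      = (Nat.card (RV σ) : ℤ) := by
    rw [← Nat.cast_sum]
    exact congrArg _ ((MAux.sum_nat_card_fiber (β := CompR σ)
      (Quotient.mk (Relation.EqvGen.setoid (adjR σ)))).trans Nat.card_eq_fintype_card.symm)
  -- edge sum
  have hedge : (∑ c : CompR σ,
      (Nat.card {e : G.E // NonIsolatedRealE σ e ∧
        ∃ v : RV σ, v.1 ∈ G.ψ e ∧ Quotient.mk (Relation.EqvGen.setoid (adjR σ)) v = c} : ℤ))
      = (Nat.card {e : G.E // RealE σ e} : ℤ) := by
    haveI : Fintype {e : G.E // NonIsolatedRealE σ e} := Fintype.ofFinite _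
    set g2 : {e : G.E // NonIsolatedRealE σ e} → CompR σ := fun e =>
      Quotient.mk (Relation.EqvGen.setoid (adjR σ))
        (⟨(G.ψ e.1).out.1, e.2.2 _ (Sym2.out_fst_mem _)⟩ : RV σ) with hg2
    have hiff : ∀ (e : {e : G.E // NonIsolatedRealE σ e}) (c : CompR σ),
        g2 e = c ↔ ∃ v : RV σ, v.1 ∈ G.ψ e.1 ∧
          Quotient.mk (Relation.EqvGen.setoid (adjR σ)) v = c := by
      intro e c
      constructor
      · intro h
        exact ⟨⟨(G.ψ e.1).out.1, e.2.2 _ (Sym2.out_fst_mem _)⟩, Sym2.out_fst_mem _, h⟩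
      · rintro ⟨v, hmem, hv⟩
        rw [hg2]
        refine Eq.trans ?_ hv
        by_cases hxy : (G.ψ e.1).out.1 = v.1
        · exact congrArg _ (Subtype.ext hxy)
        · have hψ : G.ψ e.1 = s((G.ψ e.1).out.1, v.1) :=
            (Sym2.mem_and_mem_iff hxy).mp ⟨Sym2.out_fst_mem _, hmem⟩
          exact Quotient.sound (EqvGen.rel _ _ ⟨e.1, e.2, hψ⟩)
    have hcongr : ∀ c : CompR σ,
        Nat.card {e : G.E // NonIsolatedRealE σ e ∧
          ∃ v : RV σ, v.1 ∈ G.ψ e ∧ Quotient.mk (Relation.EqvGen.setoid (adjR σ)) v = c}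
        = Nat.card {e : {e : G.E // NonIsolatedRealE σ e} // g2 e = c} := by
      intro c
      refine Nat.card_congr ?_
      refine Equiv.trans ?_ (Equiv.subtypeEquivRight fun e => (hiff e c).symm)
      exact (Equiv.subtypeSubtypeEquivSubtypeInter _ _).symm
    rw [Finset.sum_congr rfl fun c _ => congrArg _ (hcongr c), ← Nat.cast_sum,
      MAux.sum_nat_card_fiber g2]
    congr 1
    rw [← Nat.card_eq_fintype_card]
    refine Nat.card_congr (Equiv.subtypeEquivRight fun e => ?_)
    constructor
    · exact fun h => h.1
    · exact fun h => ⟨h, realE_ends hiso h⟩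
  rw [h2, hvert, hedge]
  push_cast
  ring

lemma genus_eq (hconn : G.Connected) :
    G.genus = 1 + (Fintype.card G.E : ℤ) - (Fintype.card G.V : ℤ) := by
  rw [genus, numComponents_eq_one hconn]
  push_cast
  ring

instance : DecidablePred (RealV σ) := fun u => inferInstanceAs (Decidable (σ.ιV u = u))

/-- The classifying function for the decomposition of `T`. -/
def ttfun (u : G.V) : CompR σ ⊕ QNV σ :=
  if h : RealV σ u then Sum.inl (Quotient.mk _ (⟨u, h⟩ : RV σ))
  else Sum.inr (Quotient.mk _ (⟨u, h⟩ : NV σ))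

lemma ttfun_pos {u : G.V} (h : RealV σ u) :
    ttfun σ u = Sum.inl (Quotient.mk _ (⟨u, h⟩ : RV σ)) := dif_pos h

lemma ttfun_neg {u : G.V} (h : ¬ RealV σ u) :
    ttfun σ u = Sum.inr (Quotient.mk _ (⟨u, h⟩ : NV σ)) := dif_neg h

lemma ttfun_sound (hiso : ∀ e : G.E, ¬ IsolatedRealE σ e) {a b : G.V}
    (h : EqvGen (fibRel σ) a b) : ttfun σ a = ttfun σ b := by
  induction h with
  | refl => rfl
  | symm _ _ _ ih => exact ih.symm
  | trans _ _ _ _ _ ih1 ih2 => exact ih1.trans ih2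
  | rel a b hab =>
    rcases hab with h1 | ⟨e, he, hψ⟩
    · by_cases ha : RealV σ a
      · have hba : b = a := by rw [← h1]; exact ha
        rw [hba]
      · have hb : ¬ RealV σ b := h1 ▸ nonreal_conj ha
        rw [ttfun_neg σ ha, ttfun_neg σ hb]
        congr 1
        exact Quotient.sound (Or.inr (Subtype.ext h1.symm))
    · have hra : RealV σ a := realE_ends hiso he a (hψ ▸ Sym2.mem_mk_left a b)
      have hrb : RealV σ b := realE_ends hiso he b (hψ ▸ Sym2.mem_mk_right a b)
      rw [ttfun_pos σ hra, ttfun_pos σ hrb]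
      congr 1
      exact Quotient.sound (EqvGen.rel _ _ ⟨e, ⟨he, realE_ends hiso he⟩, hψ⟩)

/-- Real components inject into `T`. -/
def invlift1 : CompR σ → TT σ :=
  Quotient.lift (fun v : RV σ => pr σ v.1) (by
    intro a b h
    refine Quotient.sound ?_
    induction h with
    | rel a b hab =>
      obtain ⟨e, hni, hψ⟩ := hab
      exact EqvGen.rel _ _ (Or.inr ⟨e, hni.1, hψ⟩)
    | refl => exact EqvGen.refl _
    | symm a b _ ih => exact ih.symm _ _
    | trans a b c _ _ ih1 ih2 => exact ih1.trans _ _ _ ih2)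

/-- Conjugate pairs inject into `T`. -/
def invlift2 : QNV σ → TT σ :=
  Quotient.lift (fun v : NV σ => pr σ v.1) (by
    rintro a b (rfl | rfl)
    · rfl
    · exact (pr_conj σ a.1).symm)

/-- The decomposition of `T` into real components and conjugate pairs. -/
def ttEquiv (hiso : ∀ e : G.E, ¬ IsolatedRealE σ e) : TT σ ≃ (CompR σ ⊕ QNV σ) where
  toFun := Quotient.lift (ttfun σ) (fun _ _ h => ttfun_sound σ hiso h)
  invFun := Sum.elim (invlift1 σ) (invlift2 σ)
  left_inv := by
    intro t
    induction t using Quotient.inductionOn with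
    | h u =>
      show Sum.elim (invlift1 σ) (invlift2 σ) (ttfun σ u) = _
      by_cases h : RealV σ u
      · rw [ttfun_pos σ h]; rfl
      · rw [ttfun_neg σ h]; rfl
  right_inv := by
    rintro (c | q)
    · induction c using Quotient.inductionOn with
      | h v =>
        show ttfun σ v.1 = _
        rw [ttfun_pos σ v.2]
        rfl
    · induction q using Quotient.inductionOn with
      | h v =>
        show ttfun σ v.1 = _
        rw [ttfun_neg σ v.2]
        rfl

/-- The tree count `e + 1 = v`. -/
lemma card_tree (hM : IsMGraph σ) : Nat.card (TE σ) + 1 = Nat.card (TT σ) := by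
  classical
  obtain ⟨hconn, hiso, hs⟩ := hM
  have hsnum := sNum_eq σ hiso
  have hgen := genus_eq (G := G) hconn
  have hV : Nat.card G.V = Nat.card (RV σ) + Nat.card (NV σ) := by
    rw [← Nat.card_sum]
    exact (Nat.card_congr (Equiv.sumCompl (fun v => RealV σ v))).symm
  have hE : Nat.card G.E = Nat.card {e : G.E // RealE σ e} + Nat.card (NE σ) := by
    rw [← Nat.card_sum]
    exact (Nat.card_congr (Equiv.sumCompl (fun e => RealE σ e))).symm
  have hNV : Nat.card (NV σ) = 2 * Nat.card (QNV σ) := by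
    haveI : Fintype (NV σ) := Fintype.ofFinite _
    rw [Nat.card_eq_fintype_card (α := NV σ)]
    exact MAux.card_eq_two_mul (conjNV σ) (conjNV_invol σ) (conjNV_ne σ) (nvSetoid σ)
      (fun _ _ => Iff.rfl)
  have hNE : Nat.card (NE σ) = 2 * Nat.card (TE σ) := by
    haveI : Fintype (NE σ) := Fintype.ofFinite _
    rw [Nat.card_eq_fintype_card (α := NE σ)]
    exact MAux.card_eq_two_mul (conjNE σ) (conjNE_invol σ) (conjNE_ne σ) (neSetoid σ)
      (fun _ _ => Iff.rfl)
  have hTT : Nat.card (TT σ) = Nat.card (CompR σ) + Nat.card (QNV σ) := by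
    rw [Nat.card_congr (ttEquiv σ hiso), Nat.card_sum]
  rw [hsnum, hgen, ← Nat.card_eq_fintype_card (α := G.E),
    ← Nat.card_eq_fintype_card (α := G.V)] at hs
  omega

end FinGraph

namespace FinGraph
open Relation

variable {G : FinGraph} (σ : RealStructure G)

lemma exists_real (hM : IsMGraph σ) : ∃ w : G.V, RealV σ w := by
  classical
  by_contra hno
  push_neg at hno
  obtain ⟨hconn, hiso, hs⟩ := hM
  haveI : IsEmpty (CompR σ) :=
    ⟨fun c => Quotient.inductionOn c fun (v : RV σ) => hno v.1 v.2⟩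
  haveI : IsEmpty {e : G.E // IsolatedRealE σ e} := ⟨fun e => hiso e.1 e.2⟩
  have hs0 : sNum σ = 0 := by
    rw [sNum, Nat.card_of_isEmpty, finsum_of_isEmpty]
    simp
  have hgen := genus_eq (G := G) hconn
  rw [hs0, hgen] at hs
  obtain ⟨⟨v0⟩, hc⟩ := hconn
  have hle := MAux.card_le_of_conn G.ψ v0 (fun w => hc v0 w)
  omega

open FinGraph in
theorem mGraph_pair_equiv_two_real' (hM : IsMGraph σ) (v : G.V) (hv : ¬ RealV σ v) :
    ∃ w : G.V, RealV σ w ∧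
      LinEquiv G (unitDiv G v + unitDiv G (σ.ιV v)) ((2 : ℤ) • unitDiv G w) := by
  classical
  have hconn := hM.1
  have hiso := hM.2.1
  have hcardN := card_tree σ hM
  haveI : Fintype (TT σ) := Fintype.ofFinite _
  haveI : Fintype (TE σ) := Fintype.ofFinite _
  have hcardF : Fintype.card (TE σ) + 1 = Fintype.card (TT σ) := by
    rw [← Nat.card_eq_fintype_card, ← Nat.card_eq_fintype_card]
    exact hcardN
  obtain ⟨w₀, hw₀⟩ := exists_real σ hM
  -- One chip-firing step across a bridge of the quotient tree.
  have step : ∀ (t t' : TT σ), MAux.adjOf (ψT σ) t t' → ∀ u : G.V, ¬ RealV σ u → pr σ u = t →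
      ∃ b : G.V, pr σ b = t' ∧
        LinEquiv G (unitDiv G u + unitDiv G (σ.ιV u))
          (unitDiv G b + unitDiv G (σ.ιV b)) := by
    intro t t' hadj u hu hp
    obtain ⟨ε, hε⟩ := hadj
    obtain ⟨e₀, rfl⟩ := Quotient.exists_rep ε
    rw [ψT_mk] at hε
    obtain ⟨x, y, hxy⟩ := sym2_exists (G.ψ e₀.1)
    rw [hxy, Sym2.map_pair_eq, Sym2.eq_iff] at hε
    have core : ∀ a c : G.V, G.ψ e₀.1 = s(a, c) → pr σ a = t → pr σ c = t' →
        ∃ b : G.V, pr σ b = t' ∧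
          LinEquiv G (unitDiv G u + unitDiv G (σ.ιV u))
            (unitDiv G b + unitDiv G (σ.ιV b)) := by
      intro a c hac hpa hpc
      set adjC : TT σ → TT σ → Prop := fun p q =>
        ∃ ε', ε' ≠ Quotient.mk (neSetoid σ) e₀ ∧ ψT σ ε' = s(p, q) with hadjC
      have hbr : ¬ ReflTransGen adjC t t' :=
        MAux.not_conn_without_bridge (ψT σ) (tt_conn σ hconn) hcardF
          (Quotient.mk (neSetoid σ) e₀)
          (by rw [ψT_mk, hac, Sym2.map_pair_eq, hpa, hpc])
      set S : TT σ → Prop := fun z => ReflTransGen adjC t z with hSdef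
      have hSt : S t := ReflTransGen.refl
      have hSt' : ¬ S t' := hbr
      set f : G.V → ℤ := fun z => if S (pr σ z) then 0 else -1 with hf
      have hfa : f a = 0 := by
        show (if S (pr σ a) then (0 : ℤ) else -1) = 0
        rw [hpa]
        exact if_pos hSt
      have hfa' : f (σ.ιV a) = 0 := by
        show (if S (pr σ (σ.ιV a)) then (0 : ℤ) else -1) = 0
        rw [pr_conj, hpa]
        exact if_pos hSt
      have hfc : f c = -1 := by
        show (if S (pr σ c) then (0 : ℤ) else -1) = -1
        rw [hpc]
        exact if_neg hSt'
      have hfc' : f (σ.ιV c) = -1 := by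
        show (if S (pr σ (σ.ιV c)) then (0 : ℤ) else -1) = -1
        rw [pr_conj, hpc]
        exact if_neg hSt'
      have hne01 : e₀.1 ≠ σ.ιE e₀.1 := fun h => e₀.2 h.symm
      have key0 : ∀ e' : G.E, e' ≠ e₀.1 → e' ≠ σ.ιE e₀.1 → edgeLap G f e' = 0 := by
        intro e' h1 h2
        obtain ⟨p, q, hpq⟩ := sym2_exists (G.ψ e')
        have hiff : S (pr σ p) ↔ S (pr σ q) := by
          by_cases hre : RealE σ e'
          · have hprpq : pr σ p = pr σ q :=
              Quotient.sound (EqvGen.rel _ _ (Or.inr ⟨e', hre, hpq⟩))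
            rw [hprpq]
          · have hadj' : adjC (pr σ p) (pr σ q) := by
              refine ⟨Quotient.mk _ (⟨e', hre⟩ : NE σ), ?_, by show (G.ψ e').map (pr σ) = _; rw [hpq, Sym2.map_pair_eq]⟩
              intro hq
              rcases (te_eq_iff σ _ _).mp hq with h | h
              · exact h1 (congrArg Subtype.val h).symm
              · have h3 := congrArg (fun x : NE σ => σ.ιE x.1) h
                simp only [conjNE, σ.ιE_invol] at h3
                exact h2 h3.symm
            obtain ⟨ε', hne, hψ'⟩ := hadj'
            constructor
            · intro hS
              exact hS.tail ⟨ε', hne, hψ'⟩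
            · intro hS
              refine hS.tail ⟨ε', hne, ?_⟩
              rw [Sym2.eq_swap]
              exact hψ'
        have hfpq : f p = f q := by
          show (if S (pr σ p) then (0 : ℤ) else -1) = (if S (pr σ q) then 0 else -1)
          rw [if_congr hiff rfl rfl]
        rw [edgeLap_eq f hpq]
        funext z
        simp [hfpq]
      have keyA : edgeLap G f e₀.1 = fun z => unitDiv G c z - unitDiv G a z := by
        rw [edgeLap_eq f hac]
        funext z
        rw [hfa, hfc]
        simp only [unitDiv]
        split_ifs <;> ring
      have hψconj : G.ψ (σ.ιE e₀.1) = s(σ.ιV a, σ.ιV c) := by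
        rw [σ.compat, hac, Sym2.map_pair_eq]
      have keyB : edgeLap G f (σ.ιE e₀.1) =
          fun z => unitDiv G (σ.ιV c) z - unitDiv G (σ.ιV a) z := by
        rw [edgeLap_eq f hψconj]
        funext z
        rw [hfa', hfc']
        simp only [unitDiv]
        split_ifs <;> ring
      have hLap : Lap G f = fun z => (unitDiv G c z + unitDiv G (σ.ιV c) z)
          - (unitDiv G a z + unitDiv G (σ.ιV a) z) := by
        funext z
        show (∑ e', edgeLap G f e' z) = _
        have hsub : ∑ e' ∈ ({e₀.1, σ.ιE e₀.1} : Finset G.E), edgeLap G f e' z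
            = ∑ e' ∈ Finset.univ, edgeLap G f e' z := by
          refine Finset.sum_subset (Finset.subset_univ _) ?_
          intro e' _ he'
          simp only [Finset.mem_insert, Finset.mem_singleton, not_or] at he'
          rw [key0 e' he'.1 he'.2]
          rfl
        rw [← hsub, Finset.sum_pair hne01, keyA, keyB]
        ring
      have hpair : ∀ z, unitDiv G a z + unitDiv G (σ.ιV a) z
          = unitDiv G u z + unitDiv G (σ.ιV u) z := by
        rcases fiber_pair hiso hu (hpa.trans hp.symm) with rfl | rfl
        · intro z; rfl
        · intro z
          rw [σ.ιV_invol]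
          ring
      refine ⟨c, hpc, f, ?_⟩
      funext z
      simp only [Pi.add_apply, hLap]
      rw [← hpair z]
      ring
    rcases hε with ⟨h1, h2⟩ | ⟨h1, h2⟩
    · exact core x y hxy h1 h2
    · exact core y x (hxy.trans Sym2.eq_swap) h2 h1
  -- Induction along a path in the quotient tree towards a real class.
  have main : ∀ (t : TT σ), ReflTransGen (MAux.adjOf (ψT σ)) t (pr σ w₀) →
      ∀ u : G.V, ¬ RealV σ u → pr σ u = t →
      ∃ w, RealV σ w ∧
        LinEquiv G (unitDiv G u + unitDiv G (σ.ιV u)) ((2 : ℤ) • unitDiv G w) := by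
    intro t ht
    induction ht using Relation.ReflTransGen.head_induction_on with
    | refl =>
      intro u hu hp
      exact absurd ((real_of_pr_eq hiso hp).mpr hw₀) hu
    | head hadj hrest ih =>
      intro u hu hp
      obtain ⟨b, hbp, hlin⟩ := step _ _ hadj u hu hp
      by_cases hb : RealV σ b
      · refine ⟨b, hb, ?_⟩
        have h2 : unitDiv G b + unitDiv G (σ.ιV b) = (2 : ℤ) • unitDiv G b := by
          rw [show σ.ιV b = b from hb, two_smul]
        rw [← h2]
        exact hlin
      · obtain ⟨w, hw, hlin2⟩ := ih b hb hbp
        exact ⟨w, hw, linEquiv_trans hlin hlin2⟩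
  exact main (pr σ v) (tt_conn σ hconn _ _) v hv rfl

end FinGraph

open FinGraph in
/-- On an M-graph, for every non-real vertex `v` there is a
real vertex `w` with `v + v̄ ∼ 2w`. -/
theorem mGraph_pair_equiv_two_real (G : FinGraph) (σ : RealStructure G)
    (hM : IsMGraph σ) (v : G.V) (hv : ¬ RealV σ v) :
    ∃ w : G.V, RealV σ w ∧
      LinEquiv G (unitDiv G v + unitDiv G (σ.ιV v)) ((2 : ℤ) • unitDiv G w) :=
  FinGraph.mGraph_pair_equiv_two_real' σ hM v hv
end

section
/- Let G be a strong M-graph. Then G has a real linear system g^1_2: there exists a real effective divisor D on G of degree 2 with rk(D) ≥ 1. -/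
namespace Scratch
open Relation

lemma card_eq_sum_fibers {α β : Type*} [Finite α] [Fintype β] (f : α → β) :
    Nat.card α = ∑ b, Nat.card {a // f a = b} := by
  letI : Fintype α := Fintype.ofFinite α
  letI : ∀ b, Fintype {a // f a = b} := fun b => Fintype.ofFinite _
  rw [Nat.card_eq_fintype_card, ← Fintype.card_congr (Equiv.sigmaFiberEquiv f),
    Fintype.card_sigma]
  simp [Nat.card_eq_fintype_card]

lemma nat_card_compl_add_one {α : Type*} [Finite α] (a : α) :
    Nat.card {x // x ≠ a} + 1 = Nat.card α := by
  classical
  letI : Fintype α := Fintype.ofFinite α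
  haveI : Unique {x // x = a} := ⟨⟨⟨a, rfl⟩⟩, fun x => Subtype.ext x.2⟩
  have h2 : Nat.card ({x // x = a} ⊕ {x // x ≠ a}) = Nat.card α :=
    Nat.card_congr (Equiv.sumCompl _)
  rw [Nat.card_sum, Nat.card_unique] at h2
  omega

lemma card_le_succ_of_almost_inj {α β : Type*} [Finite α] [Finite β] (f : α → β) (a b : α)
    (h : ∀ x y, f x = f y → x = y ∨ (x = a ∧ y = b) ∨ (x = b ∧ y = a)) :
    Nat.card α ≤ Nat.card β + 1 := by
  have hinj : Function.Injective (fun x : {x // x ≠ a} => f x.1) := by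
    rintro ⟨x, hx⟩ ⟨y, hy⟩ hxy
    rcases h x y hxy with h1 | ⟨h1, h2⟩ | ⟨h1, h2⟩
    · exact Subtype.ext h1
    · exact absurd h1 hx
    · exact absurd h2 hy
  have := Nat.card_le_card_of_injective _ hinj
  have := nat_card_compl_add_one a
  omega

lemma eqvGen_confine {α : Type*} (r : α → α → Prop) (a b : α) (x y : α)
    (h : EqvGen (fun u v => r u v ∨ (u = a ∧ v = b) ∨ (u = b ∧ v = a)) x y) :
    EqvGen r x y ∨ (EqvGen r x a ∧ EqvGen r b y) ∨ (EqvGen r x b ∧ EqvGen r a y) := by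
  induction h with
  | rel u v huv =>
    rcases huv with h1 | ⟨h1, h2⟩ | ⟨h1, h2⟩
    · exact Or.inl (EqvGen.rel _ _ h1)
    · exact Or.inr (Or.inl ⟨h1 ▸ EqvGen.refl _, h2 ▸ EqvGen.refl _⟩)
    · exact Or.inr (Or.inr ⟨h1 ▸ EqvGen.refl _, h2 ▸ EqvGen.refl _⟩)
  | refl u => exact Or.inl (EqvGen.refl _)
  | symm u v _ ih =>
    rcases ih with h1 | ⟨h1, h2⟩ | ⟨h1, h2⟩
    · exact Or.inl (EqvGen.symm _ _ h1)
    · exact Or.inr (Or.inr ⟨EqvGen.symm _ _ h2, EqvGen.symm _ _ h1⟩)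
    · exact Or.inr (Or.inl ⟨EqvGen.symm _ _ h2, EqvGen.symm _ _ h1⟩)
  | trans u v w _ _ ih1 ih2 =>
    rcases ih1 with h1 | ⟨h1, h2⟩ | ⟨h1, h2⟩ <;>
      rcases ih2 with h3 | ⟨h3, h4⟩ | ⟨h3, h4⟩
    · exact Or.inl (EqvGen.trans _ _ _ h1 h3)
    · exact Or.inr (Or.inl ⟨EqvGen.trans _ _ _ h1 h3, h4⟩)
    · exact Or.inr (Or.inr ⟨EqvGen.trans _ _ _ h1 h3, h4⟩)
    · exact Or.inr (Or.inl ⟨h1, EqvGen.trans _ _ _ h2 h3⟩)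
    · exact Or.inl (EqvGen.trans _ _ _ h1 (EqvGen.trans _ _ _
        (EqvGen.symm _ _ (EqvGen.trans _ _ _ h2 h3)) h4))
    · exact Or.inl (EqvGen.trans _ _ _ h1 h4)
    · exact Or.inr (Or.inr ⟨h1, EqvGen.trans _ _ _ h2 h3⟩)
    · exact Or.inl (EqvGen.trans _ _ _ h1 h4)
    · exact Or.inl (EqvGen.trans _ _ _ h1 (EqvGen.trans _ _ _
        (EqvGen.symm _ _ (EqvGen.trans _ _ _ h2 h3)) h4))
end Scratch

namespace Scratch
open FinGraph Relation

lemma sym2_repr {α : Type*} (s : Sym2 α) : ∃ a b, s = s(a, b) :=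
  Sym2.inductionOn s fun a b => ⟨a, b, rfl⟩

lemma card_V_le_aux (H : FinGraph) (S : Finset H.E) :
    Fintype.card H.V ≤ S.card +
      Nat.card (Quotient (Relation.EqvGen.setoid (fun v w => ∃ e ∈ S, H.ψ e = s(v, w)))) := by
  classical
  induction S using Finset.induction_on with
  | empty =>
    simp only [Finset.card_empty, zero_add]
    have hempty : ∀ x y : H.V, Relation.EqvGen (fun v w => ∃ e ∈ (∅ : Finset H.E), H.ψ e = s(v, w)) x y → x = y := by
      intro x y h
      induction h with
      | rel u v huv => obtain ⟨e, he, -⟩ := huv; simp at he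
      | refl => rfl
      | symm _ _ _ ih => exact ih.symm
      | trans _ _ _ _ _ ih1 ih2 => exact ih1.trans ih2
    have hinj : Function.Injective
        (Quotient.mk (Relation.EqvGen.setoid (fun v w => ∃ e ∈ (∅ : Finset H.E), H.ψ e = s(v, w)))) :=
      fun x y hxy => hempty x y (Quotient.exact hxy)
    calc Fintype.card H.V = Nat.card H.V := (Nat.card_eq_fintype_card).symm
      _ ≤ _ := Nat.card_le_card_of_injective _ hinj
  | @insert e S he ih =>
    obtain ⟨x0, y0, hxy0⟩ := sym2_repr (H.ψ e)
    set r := fun v w => ∃ e' ∈ S, H.ψ e' = s(v, w) with hr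
    set r' := fun v w => ∃ e' ∈ insert e S, H.ψ e' = s(v, w) with hr'
    have hmono : ∀ x y, r x y → r' x y := by
      rintro x y ⟨e', h1, h2⟩; exact ⟨e', Finset.mem_insert_of_mem h1, h2⟩
    have hsub : ∀ x y, r' x y → (fun u v => r u v ∨ (u = x0 ∧ v = y0) ∨ (u = y0 ∧ v = x0)) x y := by
      rintro x y ⟨e', h1, h2⟩
      rcases Finset.mem_insert.1 h1 with h1 | h1
      · subst h1; rw [hxy0] at h2
        rcases Sym2.eq_iff.1 h2 with ⟨ha, hb⟩ | ⟨ha, hb⟩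
        · exact Or.inr (Or.inl ⟨ha.symm, hb.symm⟩)
        · exact Or.inr (Or.inr ⟨hb.symm, ha.symm⟩)
      · exact Or.inl ⟨e', h1, h2⟩
    have key : Nat.card (Quotient (Relation.EqvGen.setoid r)) ≤
        Nat.card (Quotient (Relation.EqvGen.setoid r')) + 1 := by
      apply card_le_succ_of_almost_inj
        (Quotient.map id (fun x y hxy => Relation.EqvGen.mono hmono _ _ hxy))
        (Quotient.mk _ x0) (Quotient.mk _ y0)
      intro qx qy
      induction qx using Quotient.inductionOn with | _ x =>
      induction qy using Quotient.inductionOn with | _ y =>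
      intro hq
      have hxy : Relation.EqvGen r' x y := by
        have : (Quotient.mk (Relation.EqvGen.setoid r') x) = Quotient.mk _ y := hq
        exact Quotient.exact this
      have := eqvGen_confine r x0 y0 x y (Relation.EqvGen.mono hsub _ _ hxy)
      rcases this with h1 | ⟨h1, h2⟩ | ⟨h1, h2⟩
      · exact Or.inl (Quotient.sound h1)
      · exact Or.inr (Or.inl ⟨Quotient.sound h1, Quotient.sound (Relation.EqvGen.symm _ _ h2)⟩)
      · exact Or.inr (Or.inr ⟨Quotient.sound h1, Quotient.sound (Relation.EqvGen.symm _ _ h2)⟩)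
    have hcard : (insert e S).card = S.card + 1 := Finset.card_insert_of_notMem he
    omega

lemma numComponents_eq_one (H : FinGraph) (h : H.Connected) : H.numComponents = 1 := by
  obtain ⟨⟨v⟩, hconn⟩ := h
  rw [FinGraph.numComponents, Nat.card_eq_one_iff_unique]
  constructor
  · constructor
    intro x y
    induction x using Quotient.inductionOn with | _ a =>
    induction y using Quotient.inductionOn with | _ b =>
    apply Quotient.sound
    have : ∀ {u w : H.V}, Relation.ReflTransGen H.Adj u w → Relation.EqvGen H.Adj u w := by
      intro u w hw
      induction hw with
      | refl => exact Relation.EqvGen.refl _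
      | tail _ hstep ih => exact Relation.EqvGen.trans _ _ _ ih (Relation.EqvGen.rel _ _ hstep)
    exact this (hconn a b)
  · exact ⟨Quotient.mk _ v⟩

lemma card_V_le (H : FinGraph) (h : H.Connected) : Nat.card H.V ≤ Nat.card H.E + 1 := by
  have := card_V_le_aux H Finset.univ
  have heq : (fun v w => ∃ e ∈ (Finset.univ : Finset H.E), H.ψ e = s(v, w)) = H.Adj := by
    funext v w
    simp only [Finset.mem_univ, true_and, exists_prop]
    rfl
  rw [heq, Finset.card_univ] at this
  have h1 := numComponents_eq_one H h
  rw [FinGraph.numComponents] at h1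
  rw [Nat.card_eq_fintype_card, Nat.card_eq_fintype_card]
  omega

end Scratch
namespace Scratch
open FinGraph Relation

def orbSetoid {α : Type*} (f : α → α) (hf : ∀ a, f (f a) = a) : Setoid α :=
  ⟨fun x y => y = x ∨ y = f x, by
    constructor
    · exact fun x => Or.inl rfl
    · rintro x y (rfl | rfl)
      · exact Or.inl rfl
      · exact Or.inr (hf x).symm
    · rintro x y z (rfl | rfl) (rfl | rfl)
      · exact Or.inl rfl
      · exact Or.inr rfl
      · exact Or.inr rfl
      · exact Or.inl (hf x)⟩

lemma orbSetoid_mk_eq_iff {α : Type*} (f : α → α) (hf : ∀ a, f (f a) = a) (x y : α) :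
    Quotient.mk (orbSetoid f hf) x = Quotient.mk (orbSetoid f hf) y ↔ (y = x ∨ y = f x) :=
  ⟨fun h => Quotient.exact h, fun h => Quotient.sound h⟩

lemma card_add_fixed {α : Type*} [Finite α] (f : α → α) (hf : ∀ a, f (f a) = a) :
    Nat.card α + Nat.card {x // f x = x} = 2 * Nat.card (Quotient (orbSetoid f hf)) := by
  classical
  letI : Fintype α := Fintype.ofFinite α
  letI : Fintype (Quotient (orbSetoid f hf)) := Fintype.ofFinite _
  rw [card_eq_sum_fibers (Quotient.mk (orbSetoid f hf)),
    card_eq_sum_fibers (fun x : {x // f x = x} => Quotient.mk (orbSetoid f hf) x.1),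
    ← Finset.sum_add_distrib]
  rw [show 2 * Nat.card (Quotient (orbSetoid f hf)) =
      ∑ _c : Quotient (orbSetoid f hf), 2 by
    rw [Finset.sum_const, Finset.card_univ, Nat.card_eq_fintype_card]; ring]
  apply Finset.sum_congr rfl
  intro c _
  induction c using Quotient.inductionOn with | _ x0 =>
  have hmem : ∀ x : α, Quotient.mk (orbSetoid f hf) x = Quotient.mk (orbSetoid f hf) x0 ↔
      (x = x0 ∨ x = f x0) := by
    intro x
    rw [orbSetoid_mk_eq_iff]
    constructor
    · rintro (rfl | rfl)
      · exact Or.inl rfl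
      · exact Or.inr (by rw [hf])
    · rintro (rfl | rfl)
      · exact Or.inl rfl
      · exact Or.inr (hf x0).symm
  by_cases h : f x0 = x0
  · haveI : Unique {x // Quotient.mk (orbSetoid f hf) x = Quotient.mk (orbSetoid f hf) x0} := by
      refine ⟨⟨⟨x0, rfl⟩⟩, ?_⟩
      rintro ⟨x, hx⟩
      rcases (hmem x).1 hx with rfl | rfl
      · rfl
      · exact Subtype.ext h
    haveI : Unique {y : {x // f x = x} //
        Quotient.mk (orbSetoid f hf) y.1 = Quotient.mk (orbSetoid f hf) x0} := by
      refine ⟨⟨⟨⟨x0, h⟩, rfl⟩⟩, ?_⟩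
      rintro ⟨⟨x, hfx⟩, hx⟩
      rcases (hmem x).1 hx with rfl | rfl
      · rfl
      · exact Subtype.ext (Subtype.ext h)
    rw [Nat.card_unique, Nat.card_unique]
  · have h1 : Nat.card {x // Quotient.mk (orbSetoid f hf) x = Quotient.mk (orbSetoid f hf) x0}
        = 2 := by
      rw [Nat.card_congr (Equiv.subtypeEquivRight hmem), Nat.card_eq_fintype_card,
        Fintype.card_subtype]
      rw [show Finset.univ.filter (fun x => x = x0 ∨ x = f x0) = {x0, f x0} by
        ext x; simp [Finset.mem_insert]]
      exact Finset.card_pair (fun hh => h hh.symm)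
    haveI : IsEmpty {y : {x // f x = x} //
        Quotient.mk (orbSetoid f hf) y.1 = Quotient.mk (orbSetoid f hf) x0} := by
      refine ⟨?_⟩
      rintro ⟨⟨x, hfx⟩, hx⟩
      rcases (hmem x).1 hx with rfl | rfl
      · exact h hfx
      · exact h (by conv_lhs => rw [← hfx]; rw [hf])
    rw [h1, Nat.card_of_isEmpty]

end Scratch
namespace Scratch
open FinGraph Relation

variable {G : FinGraph} (σ : RealStructure G)

def vS : Setoid G.V := orbSetoid σ.ιV σ.ιV_invol
def eS : Setoid G.E := orbSetoid σ.ιE σ.ιE_invol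

def QV := Quotient (vS σ)
def QE := Quotient (eS σ)

instance : Finite (QV σ) := Quotient.finite _
instance : Finite (QE σ) := Quotient.finite _
instance : Finite (RV σ) := inferInstanceAs (Finite {v : G.V // RealV σ v})
instance : Finite (CompR σ) := inferInstanceAs (Finite (Quotient _))

def qmkV : G.V → QV σ := Quotient.mk (vS σ)
def qmkE : G.E → QE σ := Quotient.mk (eS σ)

lemma qmkV_conj (v : G.V) : qmkV σ (σ.ιV v) = qmkV σ v :=
  Quotient.sound (Or.inr (σ.ιV_invol v).symm)

lemma qmkV_surj : Function.Surjective (qmkV σ) := Quotient.exists_rep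

lemma qmkE_eq_iff (e e' : G.E) : qmkE σ e = qmkE σ e' ↔ (e' = e ∨ e' = σ.ιE e) :=
  orbSetoid_mk_eq_iff _ _ e e'

lemma qmkV_eq_iff (v v' : G.V) : qmkV σ v = qmkV σ v' ↔ (v' = v ∨ v' = σ.ιV v) :=
  orbSetoid_mk_eq_iff _ _ v v'

def qψ : QE σ → Sym2 (QV σ) :=
  Quotient.lift (fun e => (G.ψ e).map (qmkV σ)) (by
    rintro e e' (h | h) <;> subst h
    · rfl
    · show (G.ψ e).map (qmkV σ) = (G.ψ (σ.ιE e)).map (qmkV σ)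
      rw [σ.compat, Sym2.map_map]
      congr 1
      funext v
      exact (qmkV_conj σ v).symm)

lemma qψ_mk (e : G.E) : qψ σ (qmkE σ e) = (G.ψ e).map (qmkV σ) := rfl

/-- Counting vertices. -/
lemma count_V : Nat.card G.V + Nat.card {v : G.V // RealV σ v} = 2 * Nat.card (QV σ) :=
  card_add_fixed σ.ιV σ.ιV_invol

lemma count_E : Nat.card G.E + Nat.card {e : G.E // RealE σ e} = 2 * Nat.card (QE σ) :=
  card_add_fixed σ.ιE σ.ιE_invol

noncomputable def end1 (e : G.E) : G.V := (sym2_repr (G.ψ e)).choose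

lemma end1_mem (e : G.E) : end1 e ∈ G.ψ e := by
  obtain ⟨b, hb⟩ := (sym2_repr (G.ψ e)).choose_spec
  rw [hb]
  exact Sym2.mem_mk_left _ _

lemma same_class {e : G.E} (h : NonIsolatedRealE σ e) (v w : RV σ)
    (hv : v.1 ∈ G.ψ e) (hw : w.1 ∈ G.ψ e) :
    Quotient.mk (Relation.EqvGen.setoid (adjR σ)) v = Quotient.mk _ w := by
  by_cases hvw : v = w
  · rw [hvw]
  · have hadj : adjR σ v w := by
      refine ⟨e, h, ?_⟩
      obtain ⟨a, b, hab⟩ := sym2_repr (G.ψ e)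
      rw [hab] at hv hw ⊢
      rw [Sym2.mem_iff] at hv hw
      have hne : v.1 ≠ w.1 := fun hh => hvw (Subtype.ext hh)
      rcases hv with hv | hv <;> rcases hw with hw | hw
      · exact absurd (hv.trans hw.symm) hne
      · rw [hv, hw]
      · rw [hv, hw, Sym2.eq_swap]
      · exact absurd (hv.trans hw.symm) hne
    exact Quotient.sound (Relation.EqvGen.rel _ _ hadj)

noncomputable def cOf (x : {e : G.E // NonIsolatedRealE σ e}) : CompR σ :=
  Quotient.mk _ (⟨end1 x.1, x.2.2 _ (end1_mem x.1)⟩ : RV σ)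

lemma Ec_eq (c : CompR σ) :
    Nat.card {e : G.E // NonIsolatedRealE σ e ∧
        ∃ v : RV σ, v.1 ∈ G.ψ e ∧ Quotient.mk (Relation.EqvGen.setoid (adjR σ)) v = c}
      = Nat.card {x : {e : G.E // NonIsolatedRealE σ e} // cOf σ x = c} := by
  apply Nat.card_congr
  refine ⟨fun x => ⟨⟨x.1, x.2.1⟩, ?_⟩, fun y => ⟨y.1.1, y.1.2, ⟨_, end1_mem y.1.1, y.2⟩⟩,
    fun x => rfl, fun y => rfl⟩
  obtain ⟨e, h, v, hv, hc⟩ := x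
  exact (same_class σ h ⟨end1 e, h.2 _ (end1_mem e)⟩ v (end1_mem e) hv).trans hc

/-- The key consequence of the strong M-graph hypotheses:
`#real edges - #real vertices = -(g+1)`. -/
lemma count_real (hM : IsStrongMGraph σ) :
    (Nat.card {e : G.E // RealE σ e} : ℤ) = Nat.card {v : G.V // RealV σ v} - (G.genus + 1) := by
  classical
  obtain ⟨⟨hconn, hni, hs⟩, hcomp⟩ := hM
  letI : Fintype (CompR σ) := Fintype.ofFinite _
  -- no isolated real edges
  haveI : IsEmpty {e : G.E // IsolatedRealE σ e} := ⟨fun x => hni x.1 x.2⟩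
  have h0 : Nat.card {e : G.E // IsolatedRealE σ e} = 0 := Nat.card_of_isEmpty
  -- real edges are the non-isolated real edges
  have hre : Nat.card {e : G.E // RealE σ e} = Nat.card {e : G.E // NonIsolatedRealE σ e} := by
    apply Nat.card_congr
    apply Equiv.subtypeEquivRight
    intro e
    constructor
    · intro h
      refine ⟨h, ?_⟩
      by_contra hh
      push_neg at hh
      obtain ⟨v, hv1, hv2⟩ := hh
      exact hni e ⟨h, v, hv1, hv2⟩
    · exact fun h => h.1
  -- expand sNum
  rw [sNum, h0, finsum_eq_sum_of_fintype] at hs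
  push_cast at hs
  have hV : Nat.card (RV σ) =
      ∑ c : CompR σ, Nat.card {v : RV σ // Quotient.mk (Relation.EqvGen.setoid (adjR σ)) v = c} :=
    card_eq_sum_fibers _
  have hE : Nat.card {e : G.E // NonIsolatedRealE σ e} =
      ∑ c : CompR σ, Nat.card {e : G.E // NonIsolatedRealE σ e ∧
        ∃ v : RV σ, v.1 ∈ G.ψ e ∧ Quotient.mk (Relation.EqvGen.setoid (adjR σ)) v = c} := by
    rw [card_eq_sum_fibers (cOf σ)]
    exact Finset.sum_congr rfl fun c _ => (Ec_eq σ c).symm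
  have hsum : ∑ c : CompR σ, (compGenus σ c + 1) =
      2 * (Nat.card (CompR σ) : ℤ)
        + (Nat.card {e : G.E // NonIsolatedRealE σ e} : ℤ) - (Nat.card (RV σ) : ℤ) := by
    simp only [compGenus]
    rw [Finset.sum_add_distrib, Finset.sum_sub_distrib, Finset.sum_add_distrib,
      ← Nat.cast_sum, ← Nat.cast_sum, ← hE, ← hV]
    simp only [Finset.sum_const, Finset.card_univ, smul_eq_mul, mul_one,
      Nat.card_eq_fintype_card]
    push_cast
    ring
  rw [hsum] at hs
  have : Nat.card (RV σ) = Nat.card {v : G.V // RealV σ v} := rfl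
  rw [this] at hs
  rw [hre]
  rw [hcomp] at hs
  omega
end Scratch
namespace Scratch
open FinGraph Relation

variable {G : FinGraph} (σ : RealStructure G)

lemma tree_count (hM : IsStrongMGraph σ) :
    (Nat.card (QV σ) : ℤ) = Nat.card (QE σ) + 1 := by
  have h1 := count_V σ
  have h2 := count_E σ
  have h3 := count_real σ hM
  have hg : G.genus = 1 + (Fintype.card G.E : ℤ) - Fintype.card G.V := by
    rw [FinGraph.genus, numComponents_eq_one _ hM.1.1]
    push_cast
    ring
  rw [hg] at h3
  rw [show Nat.card G.V = Fintype.card G.V from Nat.card_eq_fintype_card] at h1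
  rw [show Nat.card G.E = Fintype.card G.E from Nat.card_eq_fintype_card] at h2
  omega

/-- Adjacency in the quotient graph. -/
def qAdj (x y : QV σ) : Prop := ∃ d : QE σ, qψ σ d = s(x, y)

/-- Adjacency in the quotient graph minus the edge `ε`. -/
def Adj' (ε : QE σ) (x y : QV σ) : Prop := ∃ d : QE σ, d ≠ ε ∧ qψ σ d = s(x, y)

lemma adj'_symm (ε : QE σ) : Symmetric (Adj' σ ε) :=
  fun _x _y ⟨d, h1, h2⟩ => ⟨d, h1, h2.trans Sym2.eq_swap⟩

lemma rtg_bind {α : Type*} {r p : α → α → Prop} {a b : α}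
    (h : ∀ x y, r x y → Relation.ReflTransGen p x y) (hr : Relation.ReflTransGen r a b) :
    Relation.ReflTransGen p a b := by
  induction hr with
  | refl => exact Relation.ReflTransGen.refl
  | tail _ hstep ih => exact ih.trans (h _ _ hstep)

lemma quotient_connected (hconn : G.Connected) (x y : QV σ) :
    Relation.ReflTransGen (qAdj σ) x y := by
  induction x using Quotient.inductionOn with | _ a =>
  induction y using Quotient.inductionOn with | _ b =>
  have : Relation.ReflTransGen (qAdj σ) (qmkV σ a) (qmkV σ b) := by
    refine Relation.ReflTransGen.lift (qmkV σ) ?_ _ _ (hconn.2 a b)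
    rintro u w ⟨e, he⟩
    refine ⟨qmkE σ e, ?_⟩
    rw [qψ_mk, he, Sym2.map_pair_eq]
  exact this

noncomputable def Tminus (ε : QE σ) : FinGraph :=
  letI := Classical.decEq (QV σ)
  letI := Fintype.ofFinite (QV σ)
  letI := Fintype.ofFinite {d : QE σ // d ≠ ε}
  { V := QV σ, E := {d : QE σ // d ≠ ε}, ψ := fun d => qψ σ d.1 }

lemma bridge (hM : IsStrongMGraph σ) (ε : QE σ) (t t' : QV σ) (hψ : qψ σ ε = s(t, t')) :
    ¬ Relation.ReflTransGen (Adj' σ ε) t t' := by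
  intro hreach
  have hstep : ∀ a b : QV σ, qAdj σ a b → Relation.ReflTransGen (Adj' σ ε) a b := by
    intro a b ⟨d, hd⟩
    by_cases h : d = ε
    · rw [h, hψ] at hd
      rcases Sym2.eq_iff.1 hd with ⟨rfl, rfl⟩ | ⟨rfl, rfl⟩
      · exact hreach
      · haveI : Std.Symm (Adj' σ ε) := ⟨fun a b h => adj'_symm σ ε h⟩
        exact Std.Symm.symm _ _ hreach
    · exact Relation.ReflTransGen.single ⟨d, h, hd⟩
  have hconnT : (Tminus σ ε).Connected := by
    refine ⟨⟨t⟩, ?_⟩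
    intro x y
    have hxy : Relation.ReflTransGen (Adj' σ ε) x y :=
      rtg_bind hstep (quotient_connected σ hM.1.1 x y)
    refine rtg_bind ?_ hxy
    rintro a b ⟨d, h1, h2⟩
    exact Relation.ReflTransGen.single ⟨⟨d, h1⟩, h2⟩
  have hcard := card_V_le (Tminus σ ε) hconnT
  have hV : Nat.card (Tminus σ ε).V = Nat.card (QV σ) := rfl
  have hE : Nat.card (Tminus σ ε).E = Nat.card {d : QE σ // d ≠ ε} := rfl
  have hcompl := nat_card_compl_add_one ε
  have htree := tree_count σ hM
  rw [hV, hE] at hcard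
  omega

end Scratch
namespace Scratch
open FinGraph Relation

variable {G : FinGraph} (σ : RealStructure G)

lemma edgeLap_eq (f : G.V → ℤ) (e : G.E) (a b : G.V) (h : G.ψ e = s(a, b)) (u : G.V) :
    edgeLap G f e u = (if u = a then f b - f a else 0) + (if u = b then f a - f b else 0) := by
  simp only [edgeLap, h, Sym2.lift_mk]

lemma lap_add (f g : G.V → ℤ) : Lap G (f + g) = Lap G f + Lap G g := by
  funext u
  show ∑ e, edgeLap G (f + g) e u = (∑ e, edgeLap G f e u) + ∑ e, edgeLap G g e u
  rw [← Finset.sum_add_distrib]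
  refine Finset.sum_congr rfl fun e _ => ?_
  obtain ⟨a, b, hab⟩ := sym2_repr (G.ψ e)
  rw [edgeLap_eq f e a b hab, edgeLap_eq g e a b hab, edgeLap_eq (f + g) e a b hab]
  simp only [Pi.add_apply]
  split_ifs <;> ring

lemma lap_neg (f : G.V → ℤ) : Lap G (-f) = -Lap G f := by
  funext u
  show ∑ e, edgeLap G (-f) e u = -∑ e, edgeLap G f e u
  rw [← Finset.sum_neg_distrib]
  refine Finset.sum_congr rfl fun e _ => ?_
  obtain ⟨a, b, hab⟩ := sym2_repr (G.ψ e)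
  rw [edgeLap_eq f e a b hab, edgeLap_eq (-f) e a b hab]
  simp only [Pi.neg_apply]
  split_ifs <;> ring

lemma linEquiv_refl (D : G.V → ℤ) : LinEquiv G D D := by
  refine ⟨0, ?_⟩
  funext u
  have : Lap G 0 u = 0 := by
    show ∑ e, edgeLap G 0 e u = 0
    refine Finset.sum_eq_zero fun e _ => ?_
    obtain ⟨a, b, hab⟩ := sym2_repr (G.ψ e)
    rw [edgeLap_eq 0 e a b hab]
    simp
  simp [this]

lemma linEquiv_trans {D1 D2 D3 : G.V → ℤ} (h1 : LinEquiv G D1 D2) (h2 : LinEquiv G D2 D3) :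
    LinEquiv G D1 D3 := by
  obtain ⟨f, hf⟩ := h1
  obtain ⟨g, hg⟩ := h2
  exact ⟨f + g, by rw [hg, hf, lap_add]; funext u; simp; ring⟩

/-- The basic degree-2 real divisor attached to a vertex. -/
def Dv (v : G.V) : G.V → ℤ := fun u => (if u = v then 1 else 0) + (if u = σ.ιV v then 1 else 0)

lemma Dv_conj (v : G.V) : Dv σ (σ.ιV v) = Dv σ v := by
  funext u
  simp only [Dv, σ.ιV_invol]
  ring

/-- The key moving lemma: along an edge, `Dv v ∼ Dv w`. -/
lemma move (hM : IsStrongMGraph σ) {v w : G.V} (hadj : G.Adj v w) :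
    LinEquiv G (Dv σ v) (Dv σ w) := by
  classical
  obtain ⟨e, he⟩ := hadj
  by_cases hq : qmkV σ v = qmkV σ w
  · rcases (qmkV_eq_iff σ v w).1 hq with h | h
    · rw [h]; exact linEquiv_refl _
    · rw [h, Dv_conj]; exact linEquiv_refl _
  · have hvw : v ≠ w := fun h => hq (by rw [h])
    set ε := qmkE σ e with hε
    have hψε : qψ σ ε = s(qmkV σ v, qmkV σ w) := by
      rw [hε, qψ_mk, he, Sym2.map_pair_eq]
    have hB := bridge σ hM ε (qmkV σ v) (qmkV σ w) hψε
    set A : G.V → Prop := fun u => Relation.ReflTransGen (Adj' σ ε) (qmkV σ u) (qmkV σ v)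
      with hA
    have hAv : A v := Relation.ReflTransGen.refl
    have hAvbar : A (σ.ιV v) := by
      show Relation.ReflTransGen (Adj' σ ε) (qmkV σ (σ.ιV v)) (qmkV σ v)
      rw [qmkV_conj]
    have hAw : ¬ A w := fun h =>
      hB (by haveI : Std.Symm (Adj' σ ε) := ⟨fun a b h => adj'_symm σ ε h⟩; exact Std.Symm.symm _ _ h)
    have hAwbar : ¬ A (σ.ιV w) := by
      intro h
      apply hAw
      show Relation.ReflTransGen (Adj' σ ε) (qmkV σ w) (qmkV σ v)
      rw [← qmkV_conj σ w]
      exact h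
    -- edges not in the orbit of e do not cross A
    have hA_edge : ∀ e' : G.E, e' ≠ e → e' ≠ σ.ιE e → ∀ a b : G.V, G.ψ e' = s(a, b) →
        (A a ↔ A b) := by
      intro e' h1 h2 a b hab
      have hd : qmkE σ e' ≠ ε := by
        rw [hε, Ne, qmkE_eq_iff]
        push_neg
        refine ⟨fun hh => h1 ?_, fun hh => h2 ?_⟩
        · rw [hh]
        · rw [← σ.ιE_invol e', hh]
      have hadj' : Adj' σ ε (qmkV σ a) (qmkV σ b) :=
        ⟨qmkE σ e', hd, by rw [qψ_mk, hab, Sym2.map_pair_eq]⟩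
      constructor
      · intro ha
        exact (Relation.ReflTransGen.single (adj'_symm σ ε hadj')).trans ha
      · intro hb
        exact (Relation.ReflTransGen.single hadj').trans hb
    set c : ℤ := if σ.ιE e = e then 2 else 1 with hc
    set f : G.V → ℤ := fun u => if A u then c else 0 with hf
    have hfval : ∀ u : G.V, A u → f u = c := fun u hu => by rw [hf]; exact if_pos hu
    have hfval' : ∀ u : G.V, ¬ A u → f u = 0 := fun u hu => by rw [hf]; exact if_neg hu
    have hconst : ∀ e' : G.E, e' ≠ e → e' ≠ σ.ιE e → ∀ u : G.V, edgeLap G f e' u = 0 := by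
      intro e' h1 h2 u
      obtain ⟨a, b, hab⟩ := sym2_repr (G.ψ e')
      rw [edgeLap_eq f e' a b hab]
      have : f a = f b := by
        by_cases ha : A a
        · rw [hfval a ha, hfval b ((hA_edge e' h1 h2 a b hab).1 ha)]
        · rw [hfval' a ha, hfval' b (fun hb => ha ((hA_edge e' h1 h2 a b hab).2 hb))]
      rw [this]
      simp
    refine ⟨f, ?_⟩
    funext u
    show Dv σ w u = Dv σ v u + ∑ e', edgeLap G f e' u
    by_cases hre : σ.ιE e = e
    · -- real edge case
      have hni := hM.1.2.1 e
      rw [IsolatedRealE] at hni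
      push_neg at hni
      have hends : ∀ x ∈ G.ψ e, RealV σ x := hni hre
      have hv : σ.ιV v = v := hends v (by rw [he]; exact Sym2.mem_mk_left _ _)
      have hw : σ.ιV w = w := hends w (by rw [he]; exact Sym2.mem_mk_right _ _)
      have hsum : ∑ e', edgeLap G f e' u = edgeLap G f e u := by
        refine Finset.sum_eq_single e (fun e' _ h1 => hconst e' h1 (by rwa [hre]) u)
          (fun h => absurd (Finset.mem_univ e) h)
      rw [hsum, edgeLap_eq f e v w he, hfval v hAv, hfval' w hAw]
      have hc2 : c = 2 := if_pos hre
      simp only [Dv, hv, hw, hc2]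
      split_ifs <;> omega
    · -- non-real edge case
      have hee : e ≠ σ.ιE e := fun h => hre h.symm
      have hsum : ∑ e', edgeLap G f e' u = edgeLap G f e u + edgeLap G f (σ.ιE e) u := by
        rw [← Finset.sum_subset (Finset.subset_univ {e, σ.ιE e})
          (fun e' _ h1 => by
            simp only [Finset.mem_insert, Finset.mem_singleton] at h1
            push_neg at h1
            exact hconst e' h1.1 h1.2 u)]
        rw [Finset.sum_pair hee]
      have hψbar : G.ψ (σ.ιE e) = s(σ.ιV v, σ.ιV w) := by
        rw [σ.compat, he, Sym2.map_pair_eq]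
      have hc1 : c = 1 := if_neg hre
      rw [hsum, edgeLap_eq f e v w he, edgeLap_eq f (σ.ιE e) (σ.ιV v) (σ.ιV w) hψbar,
        hfval v hAv, hfval' w hAw, hfval (σ.ιV v) hAvbar, hfval' (σ.ιV w) hAwbar, hc1]
      simp only [Dv]
      split_ifs <;> omega

lemma equiv_all (hM : IsStrongMGraph σ) (v w : G.V) : LinEquiv G (Dv σ v) (Dv σ w) := by
  have h := hM.1.1.2 v w
  induction h with
  | refl => exact linEquiv_refl _
  | tail _ hstep ih => exact linEquiv_trans ih (move σ hM hstep)

lemma eff_deg_one (E : G.V → ℤ) (hE : Eff E) (hd : deg E = 1) :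
    ∃ x : G.V, E = fun u => if u = x then 1 else 0 := by
  classical
  have hex : ∃ x : G.V, 1 ≤ E x := by
    by_contra h
    push_neg at h
    have : ∀ x : G.V, E x = 0 := fun x => le_antisymm (by have := h x; omega) (hE x)
    rw [deg] at hd
    simp [this] at hd
  obtain ⟨x, hx⟩ := hex
  have hsplit : E x + ∑ u ∈ Finset.univ.erase x, E u = deg E := Finset.add_sum_erase _ _ (Finset.mem_univ x)
  have hnn : 0 ≤ ∑ u ∈ Finset.univ.erase x, E u := Finset.sum_nonneg fun u _ => hE u
  have hzero : ∀ u ∈ Finset.univ.erase x, E u = 0 := by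
    have hsz : ∑ u ∈ Finset.univ.erase x, E u = 0 := by omega
    intro u hu
    have h1 := Finset.sum_eq_zero_iff_of_nonneg (fun u _ => hE u) |>.1 hsz u hu
    exact h1
  refine ⟨x, funext fun u => ?_⟩
  by_cases h : u = x
  · rw [h, if_pos rfl]; omega
  · rw [if_neg h]
    exact hzero u (Finset.mem_erase.2 ⟨h, Finset.mem_univ u⟩)

end Scratch

open FinGraph in
/-- A strong M-graph has a real linear system `g^1_2`: a real
effective divisor of degree `2` and rank at least `1`. -/
theorem strongMGraph_has_g12 (G : FinGraph) (σ : RealStructure G)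
    (hM : IsStrongMGraph σ) :
    ∃ D : G.V → ℤ, IsRealDiv σ D ∧ Eff D ∧ deg D = 2 ∧ RankGE G D 1 := by
  classical
  obtain ⟨v0⟩ := hM.1.1.1
  refine ⟨Scratch.Dv σ v0, ?_, ?_, ?_, ?_⟩
  · funext u
    show Scratch.Dv σ v0 (σ.ιV u) = Scratch.Dv σ v0 u
    simp only [Scratch.Dv]
    have h1 : (σ.ιV u = v0) = (u = σ.ιV v0) :=
      propext ⟨fun h => by rw [← h, σ.ιV_invol], fun h => by rw [h, σ.ιV_invol]⟩
    have h2 : (σ.ιV u = σ.ιV v0) = (u = v0) :=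
      propext ⟨fun h => by rw [← σ.ιV_invol u, h, σ.ιV_invol], fun h => by rw [h]⟩
    simp only [h1, h2]
    ring
  · intro u
    simp only [Scratch.Dv]
    split_ifs <;> omega
  · show (∑ u, Scratch.Dv σ v0 u) = 2
    simp only [Scratch.Dv]
    rw [Finset.sum_add_distrib]
    simp [Finset.sum_ite_eq', Finset.mem_univ]
  · intro E hE hdeg
    obtain ⟨x, rfl⟩ := Scratch.eff_deg_one E hE hdeg
    refine ⟨Scratch.Dv σ x, Scratch.equiv_all σ hM v0 x, ?_, ?_⟩
    · intro u
      simp only [Scratch.Dv]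
      split_ifs <;> omega
    · intro u
      simp only [Scratch.Dv, Pi.sub_apply]
      split_ifs <;> omega
end

section
/- Let Q be a formally real field containing ℝ as a subfield. Then the ℝ-algebra Q ⊗_ℝ ℂ is a field. -/
open TensorProduct in
/-- If `Q` is a formally real field containing `ℝ` (i.e. a
field extension of `ℝ` in which `-1` is not a sum of squares), then the
`ℝ`-algebra `Q ⊗_ℝ ℂ` is a field. -/
theorem tensor_complex_isField (Q : Type) [Field Q] [Algebra ℝ Q]
    (hQ : ¬ IsSumSq (-1 : Q)) :
    IsField (Q ⊗[ℝ] ℂ) := by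
  -- In a formally real field, a sum of two squares vanishes only if both terms do.
  have key : ∀ a b : Q, a ^ 2 + b ^ 2 = 0 → a = 0 ∧ b = 0 := by
    have aux : ∀ a b : Q, a ^ 2 + b ^ 2 = 0 → a = 0 := by
      intro a b h
      by_contra ha
      apply hQ
      have : (-1 : Q) = (b / a) * (b / a) + 0 := by
        field_simp
        linear_combination -h
      rw [this]
      exact IsSumSq.sq_add _ IsSumSq.zero
    intro a b h
    exact ⟨aux a b h, aux b a (by linear_combination h)⟩
  -- the basis 1 ⊗ 1, 1 ⊗ i of Q ⊗ ℂ over Q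
  let B : Module.Basis (Fin 2) Q (Q ⊗[ℝ] ℂ) := Algebra.TensorProduct.basis Q Complex.basisOneI
  have mul_formula : ∀ a b c d : Q,
      (a ⊗ₜ[ℝ] (1 : ℂ) + b ⊗ₜ[ℝ] Complex.I) * (c ⊗ₜ[ℝ] (1 : ℂ) + d ⊗ₜ[ℝ] Complex.I)
        = (a * c - b * d) ⊗ₜ[ℝ] (1 : ℂ) + (a * d + b * c) ⊗ₜ[ℝ] Complex.I := by
    intro a b c d
    simp only [add_mul, mul_add, Algebra.TensorProduct.tmul_mul_tmul, one_mul, mul_one,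
      Complex.I_mul_I, sub_tmul, add_tmul, tmul_neg]
    abel
  refine ⟨?_, mul_comm, ?_⟩
  · refine ⟨1, 0, ?_⟩
    have h1 : (1 : Q ⊗[ℝ] ℂ) = B 0 := by
      simp [B, Algebra.TensorProduct.basis_apply, Complex.basisOneI, Algebra.TensorProduct.one_def]
    rw [h1]
    exact B.ne_zero 0
  · intro x hx
    set a : Q := B.repr x 0 with ha
    set b : Q := B.repr x 1 with hb
    have hxab : x = a ⊗ₜ[ℝ] (1 : ℂ) + b ⊗ₜ[ℝ] Complex.I := by
      have := B.sum_repr x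
      rw [Fin.sum_univ_two] at this
      rw [← this]
      rw [Algebra.TensorProduct.basis_repr_symm_apply' , Algebra.TensorProduct.basis_repr_symm_apply']
      simp [Complex.basisOneI]
      rfl
    have hn : a ^ 2 + b ^ 2 ≠ 0 := by
      intro h
      obtain ⟨h0, h1⟩ := key a b h
      apply hx
      rw [hxab, h0, h1]
      simp
    set n : Q := a ^ 2 + b ^ 2 with hn'
    refine ⟨(a / n) ⊗ₜ[ℝ] (1 : ℂ) + (-(b / n)) ⊗ₜ[ℝ] Complex.I, ?_⟩
    rw [hxab, mul_formula]
    have hc1 : a * (a / n) - b * (-(b / n)) = 1 := by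
      field_simp
      ring
    have hc2 : a * (-(b / n)) + b * (a / n) = 0 := by
      field_simp
      ring
    rw [hc1, hc2]
    simp [Algebra.TensorProduct.one_def]
end

section
/- Let R be a complete discrete valuation ring containing ℝ such that the fraction field of R is a formally real field and the residue field R/m is a finite extension of ℝ (via the composite ℝ → R → R/m). Then the residue field is equal to ℝ, i.e., the composite map ℝ → R/m is an isomorphism. -/
open Polynomial IsLocalRing

/-- In the residue field of `R` (under the hypotheses), no element squares to `-1`. -/
lemma no_sqrt_neg_one (R : Type) [CommRing R] [IsDomain R]
    [IsDiscreteValuationRing R] [Algebra ℝ R]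
    [IsAdicComplete (IsLocalRing.maximalIdeal R) R]
    (hreal : ¬ IsSumSq (-1 : FractionRing R))
    (y : IsLocalRing.ResidueField R) : y ^ 2 ≠ -1 := by
  intro hy
  obtain ⟨a, rfl⟩ := Ideal.Quotient.mk_surjective y
  -- Hensel's lemma applied to X^2 + 1
  have hmon : (X ^ 2 + 1 : R[X]).Monic := by monicity!
  have h1 : (X ^ 2 + 1 : R[X]).eval a ∈ maximalIdeal R := by
    have : Ideal.Quotient.mk (maximalIdeal R) ((X ^ 2 + 1 : R[X]).eval a) = 0 := by
      simp only [eval_add, eval_pow, eval_X, eval_one, map_add, map_pow, map_one]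
      rw [show (Ideal.Quotient.mk (maximalIdeal R)) a ^ 2 = -1 from hy]; ring
    rwa [Ideal.Quotient.eq_zero_iff_mem] at this
  have h2ne : (2 : IsLocalRing.ResidueField R) ≠ 0 := by
    have h2 : (algebraMap ℝ (IsLocalRing.ResidueField R)) 2 ≠ 0 := fun h =>
      two_ne_zero ((algebraMap ℝ (IsLocalRing.ResidueField R)).injective
        (by rw [h, map_zero]))
    rwa [map_ofNat] at h2
  have hy0 : (Ideal.Quotient.mk (maximalIdeal R)) a ≠ 0 := by
    intro h; apply neg_ne_zero.mpr (one_ne_zero (α := ResidueField R)); rw [← hy]; exact (pow_eq_zero_iff two_ne_zero).mpr h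
  have h2 : IsUnit (Ideal.Quotient.mk (maximalIdeal R)
      ((X ^ 2 + 1 : R[X]).derivative.eval a)) := by
    have hder : (X ^ 2 + 1 : R[X]).derivative.eval a = 2 * a := by
      simp [derivative_X_pow]
      exact Or.inl one_add_one_eq_two
    rw [hder, map_mul]
    have : (Ideal.Quotient.mk (maximalIdeal R)) (2 : R) = 2 := by
      rw [map_ofNat]
    rw [this]
    exact (mul_ne_zero h2ne hy0).isUnit
  obtain ⟨b, hb, -⟩ := HenselianRing.is_henselian (I := maximalIdeal R)
    (X ^ 2 + 1 : R[X]) hmon a h1 h2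
  have hb' : b ^ 2 + 1 = 0 := by simpa [Polynomial.IsRoot] using hb
  apply hreal
  have hsq : ((algebraMap R (FractionRing R)) b) ^ 2 = -1 := by
    have := congrArg (algebraMap R (FractionRing R)) hb'
    simp only [map_add, map_pow, map_one, map_zero] at this
    linear_combination this
  have hmm : ((algebraMap R (FractionRing R)) b) * ((algebraMap R (FractionRing R)) b)
      = -1 := by rw [← pow_two]; exact hsq
  rw [← hmm]
  simpa using IsSumSq.sq_add ((algebraMap R (FractionRing R)) b) 0 IsSumSq.zero

/-- If `R` is a complete discrete valuation ring containing
`ℝ` whose fraction field is formally real (`-1` is not a sum of squares in it)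
and whose residue field is a finite extension of `ℝ` via the composite
`ℝ → R → R/m`, then this composite `ℝ → R/m` is an isomorphism. -/
theorem residueField_eq_real (R : Type) [CommRing R] [IsDomain R]
    [IsDiscreteValuationRing R] [Algebra ℝ R]
    [IsAdicComplete (IsLocalRing.maximalIdeal R) R]
    (hreal : ¬ IsSumSq (-1 : FractionRing R))
    (hfin : ((IsLocalRing.residue R).comp (algebraMap ℝ R)).Finite) :
    Function.Bijective ((IsLocalRing.residue R).comp (algebraMap ℝ R)) := by
  set k := IsLocalRing.ResidueField R
  have heq : algebraMap ℝ k = (IsLocalRing.residue R).comp (algebraMap ℝ R) := by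
    ext x; rfl
  rw [← heq]
  constructor
  · exact (algebraMap ℝ k).injective
  · -- surjectivity
    intro x
    have hintel : IsIntegral ℝ x := by
      obtain ⟨p, hm, he⟩ := hfin.to_isIntegral x
      exact ⟨p, hm, by rwa [← heq] at he⟩
    set p := minpoly ℝ x with hp
    have hirr : Irreducible p := minpoly.irreducible hintel
    have hmon : p.Monic := minpoly.monic hintel
    have hdeg1 : 1 ≤ p.natDegree := minpoly.natDegree_pos hintel
    have hdeg2 : p.natDegree ≤ 2 := hirr.natDegree_le_two
    interval_cases h : p.natDegree
    · -- degree 1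
      have hpe : p = X + C (p.coeff 0) := hmon.eq_X_add_C h
      have hthis := minpoly.aeval ℝ x
      rw [← hp, hpe] at hthis
      simp only [map_add, aeval_X, aeval_C] at hthis
      exact ⟨-(p.coeff 0), by rw [map_neg]; linear_combination -hthis⟩
    · -- degree 2: derive a square root of -1, contradiction
      exfalso
      set b := p.coeff 1
      set c := p.coeff 0
      have hc2 : p.coeff 2 = 1 := by
        have := hmon.coeff_natDegree
        rwa [h] at this
      have haev : x ^ 2 + (algebraMap ℝ k) b * x + (algebraMap ℝ k) c = 0 := by
        have h0 := minpoly.aeval ℝ x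
        rw [← hp] at h0
        rw [Polynomial.aeval_eq_sum_range (p := p) (x := x), h] at h0
        simp only [Finset.sum_range_succ, Finset.sum_range_zero, zero_add, pow_zero, pow_one,
          smul_eq_mul, mul_one] at h0
        rw [hc2] at h0
        simp only [Algebra.smul_def, map_one, one_mul] at h0
        linear_combination h0
      -- the discriminant is negative
      have hd : c - b ^ 2 / 4 > 0 := by
        by_contra hle
        push_neg at hle
        set r : ℝ := -b / 2 + Real.sqrt (b ^ 2 / 4 - c) with hr
        have hroot : p.IsRoot r := by
          have hsq : Real.sqrt (b ^ 2 / 4 - c) ^ 2 = b ^ 2 / 4 - c := by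
            rw [Real.sq_sqrt]; linarith
          have hev : p.eval r = r ^ 2 + b * r + c := by
            conv_lhs => rw [Polynomial.eval_eq_sum_range, h]
            simp only [Finset.sum_range_succ, Finset.sum_range_zero, zero_add, pow_zero, pow_one,
              mul_one]
            rw [hc2]; ring
          rw [Polynomial.IsRoot, hev]
          have h1 : r ^ 2 + b * r + c = (r + b / 2) ^ 2 - (b ^ 2 / 4 - c) := by ring
          rw [h1]
          have h2 : r + b / 2 = Real.sqrt (b ^ 2 / 4 - c) := by rw [hr]; ring
          rw [h2, hsq]; ring
        obtain ⟨q, hq⟩ := (Polynomial.dvd_iff_isRoot.mpr hroot)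
        rcases hirr.isUnit_or_isUnit hq with hu | hu
        · exact Polynomial.not_isUnit_X_sub_C r hu
        · have hq0 : q ≠ 0 := by
            intro h0; rw [h0, mul_zero] at hq
            exact hirr.ne_zero hq
          have : p.natDegree = 1 + q.natDegree := by
            rw [hq, Polynomial.natDegree_mul (Polynomial.X_sub_C_ne_zero r) hq0,
              Polynomial.natDegree_X_sub_C]
          rw [Polynomial.natDegree_eq_zero_of_isUnit hu, h] at this
          omega
      -- construct y with y^2 = -1
      set d := c - b ^ 2 / 4 with hdd
      set y : k := (x + (algebraMap ℝ k) (b / 2)) * (algebraMap ℝ k) (1 / Real.sqrt d)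
      have hy : y ^ 2 = -1 := by
        have hsq : ((algebraMap ℝ k) (1 / Real.sqrt d)) ^ 2 = (algebraMap ℝ k) (1 / d) := by
          rw [← map_pow]
          congr 1
          rw [div_pow, one_pow, Real.sq_sqrt hd.le]
        have hx2 : (x + (algebraMap ℝ k) (b / 2)) ^ 2 = - (algebraMap ℝ k) d := by
          have hb2 : ((algebraMap ℝ k) (b / 2)) ^ 2 = (algebraMap ℝ k) (b ^ 2 / 4) := by
            rw [← map_pow]; congr 1; ring
          have hexp : (x + (algebraMap ℝ k) (b / 2)) ^ 2
              = x ^ 2 + (algebraMap ℝ k) b * x + (algebraMap ℝ k) (b ^ 2 / 4) := by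
            rw [← hb2]
            have hbb : (algebraMap ℝ k) b = (algebraMap ℝ k) (b / 2) * 2 := by
              rw [(map_ofNat (algebraMap ℝ k) 2).symm, ← map_mul]
              congr 1; ring
            rw [hbb]; ring
          have hmap : (algebraMap ℝ k) d = (algebraMap ℝ k) c - (algebraMap ℝ k) (b ^ 2 / 4) := by
            rw [hdd, map_sub]
          rw [hexp]
          linear_combination haev + hmap
        calc y ^ 2 = (x + (algebraMap ℝ k) (b / 2)) ^ 2
              * ((algebraMap ℝ k) (1 / Real.sqrt d)) ^ 2 := by rw [mul_pow]
          _ = - (algebraMap ℝ k) d * (algebraMap ℝ k) (1 / d) := by rw [hx2, hsq]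
          _ = - (algebraMap ℝ k) (d * (1 / d)) := by rw [map_mul]; ring
          _ = -1 := by rw [mul_one_div, div_self hd.ne', map_one]
      exact no_sqrt_neg_one R hreal y hy
end
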